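/- arXiv:1502.06896 — 3 statements merged into one kernel-verified Lean document; each statement's English description precedes it below -/
import Mathlib

section
/- Let N be a matroid of rank 2 without loops and L ⊆ E(N) with |L| = 2 such that L is independent. Then there is a biased graph Ω with F(Ω) isomorphic to N in which both elements of L are unbalanced loops. -/
open Set

/-! ### Matroid core -/

namespace Matroid

variable {α : Type*}

/-- A circuit: a minimal dependent set. -/
def Circuit' (M : Matroid α) (C : Set α) : Prop :=
  M.Dep C ∧ ∀ D, D ⊂ C → M.Indep D

/-- A matroid is connected if its ground set is nonempty and every two distinct
elements lie in a common circuit. -/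
def Connected' (M : Matroid α) : Prop :=
  M.E.Nonempty ∧ ∀ e ∈ M.E, ∀ f ∈ M.E, e ≠ f → ∃ C, M.Circuit' C ∧ e ∈ C ∧ f ∈ C

/-- Deletion of a set of elements. -/
def del (M : Matroid α) (D : Set α) : Matroid α := M ↾ (M.E \ D)

/-- Contraction of a set of elements. -/
def con (M : Matroid α) (C : Set α) : Matroid α := (M✶.del C)✶

/-- `N` is a minor of `M`. -/
def IsMinor' (N M : Matroid α) : Prop :=
  ∃ C D : Set α, Disjoint C D ∧ C ⊆ M.E ∧ D ⊆ M.E ∧ N = (M.con C).del D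

def IsStrictMinor' (N M : Matroid α) : Prop := N.IsMinor' M ∧ N ≠ M

/-- The rank (as an extended natural number) of a set in a matroid. -/
noncomputable def eRk' (M : Matroid α) (X : Set α) : ℕ∞ :=
  ⨆ I : {I : Set α // M.Indep I ∧ I ⊆ X}, I.1.encard

/-- A cocircuit is a circuit of the dual matroid. -/
def Cocircuit' (M : Matroid α) (K : Set α) : Prop := M✶.Circuit' K

/-- A loop is a one-element circuit. -/
def IsLoopElem (M : Matroid α) (e : α) : Prop := M.Circuit' {e}

end Matroid

/-! ### Biased graph core -/

universe u v

/-- A multigraph, given by assigning two (possibly equal) endpoints to each edge. -/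
structure MultiGraph (V : Type u) (E : Type v) where
  fst : E → V
  snd : E → V

namespace MultiGraph

variable {V : Type u} {E : Type v} (G : MultiGraph V E)

/-- Vertex `v` is incident with edge `e`. -/
def Inc (v : V) (e : E) : Prop := G.fst e = v ∨ G.snd e = v

/-- `e` is a loop. -/
def IsLoopEdge (e : E) : Prop := G.fst e = G.snd e

/-- `e` is a link (an edge with two distinct endpoints). -/
def IsLink (e : E) : Prop := G.fst e ≠ G.snd e

/-- The set of vertices incident with an edge in `X`. -/
def VSet (X : Set E) : Set V := {v | ∃ e ∈ X, G.Inc v e}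

/-- The degree of `v` in the edge set `X` (loops count twice). -/
noncomputable def deg (X : Set E) (v : V) : ℕ :=
  {e | e ∈ X ∧ G.fst e = v}.ncard + {e | e ∈ X ∧ G.snd e = v}.ncard

/-- Two edges of `X` are adjacent if they share a vertex. -/
def EdgeAdj (X : Set E) (e f : E) : Prop := e ∈ X ∧ f ∈ X ∧ ∃ v, G.Inc v e ∧ G.Inc v f

/-- The subgraph induced by the edge set `X` is connected. -/
def ConnectedOn (X : Set E) : Prop :=
  ∀ ⦃e f⦄, e ∈ X → f ∈ X → Relation.ReflTransGen (G.EdgeAdj X) e f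

/-- An edge set is a cycle if it is finite, nonempty, connected and every
incident vertex has degree exactly two. -/
def IsCycle (C : Set E) : Prop :=
  C.Finite ∧ C.Nonempty ∧ G.ConnectedOn C ∧ ∀ v ∈ G.VSet C, G.deg C v = 2

/-- The ends of an edge set: its vertices of degree one. -/
def Ends (P : Set E) : Set V := {v | v ∈ G.VSet P ∧ G.deg P v = 1}

/-- An edge set is a path if it is finite, nonempty, connected, has maximum degree
two and exactly two vertices of degree one. -/
def IsPath (P : Set E) : Prop :=
  P.Finite ∧ P.Nonempty ∧ G.ConnectedOn P ∧ (∀ v ∈ G.VSet P, G.deg P v ≤ 2) ∧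
    (G.Ends P).ncard = 2

/-- `C` is (the edge set of) a connected component of the subgraph induced by `X`. -/
def IsComponentOf (C X : Set E) : Prop :=
  ∃ e ∈ X, C = {f | f ∈ X ∧ Relation.ReflTransGen (G.EdgeAdj X) e f}

end MultiGraph

/-- A biased graph: a multigraph with a distinguished collection of "balanced" edge sets. -/
structure BiasedGraph (V : Type u) (E : Type v) extends MultiGraph V E where
  Balanced : Set (Set E)

namespace BiasedGraph

variable {V : Type u} {E : Type v} (Ω : BiasedGraph V E)

/-- The theta property: every balanced set is a cycle, and no theta subgraph
(a union of two cycles whose symmetric difference is a cycle) contains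
exactly two balanced cycles. -/
def ThetaProperty : Prop :=
  (∀ C ∈ Ω.Balanced, Ω.toMultiGraph.IsCycle C) ∧
  ∀ C₁ C₂ C₃ : Set E, Ω.toMultiGraph.IsCycle C₁ → Ω.toMultiGraph.IsCycle C₂ →
    Ω.toMultiGraph.IsCycle C₃ → C₃ = symmDiff C₁ C₂ →
    C₁ ∈ Ω.Balanced → C₂ ∈ Ω.Balanced → C₃ ∈ Ω.Balanced

def IsBalancedCycle (C : Set E) : Prop := Ω.toMultiGraph.IsCycle C ∧ C ∈ Ω.Balanced

def IsUnbalancedCycle (C : Set E) : Prop := Ω.toMultiGraph.IsCycle C ∧ C ∉ Ω.Balanced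

/-- The subgraph induced by `X` is balanced: every cycle inside it is balanced. -/
def BalancedOn (X : Set E) : Prop :=
  ∀ C ⊆ X, Ω.toMultiGraph.IsCycle C → C ∈ Ω.Balanced

/-- A contrabalanced theta subgraph: all three of its cycles are unbalanced. -/
def IsContraTheta (T : Set E) : Prop :=
  ∃ C₁ C₂ C₃ : Set E, Ω.IsUnbalancedCycle C₁ ∧ Ω.IsUnbalancedCycle C₂ ∧
    Ω.IsUnbalancedCycle C₃ ∧ C₃ = symmDiff C₁ C₂ ∧ T = C₁ ∪ C₂

/-- Tight handcuffs: two edge-disjoint unbalanced cycles meeting in exactly one vertex. -/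
def IsTightHandcuff (H : Set E) : Prop :=
  ∃ C₁ C₂ : Set E, Ω.IsUnbalancedCycle C₁ ∧ Ω.IsUnbalancedCycle C₂ ∧ Disjoint C₁ C₂ ∧
    (∃ v, Ω.toMultiGraph.VSet C₁ ∩ Ω.toMultiGraph.VSet C₂ = {v}) ∧ H = C₁ ∪ C₂

/-- Loose handcuffs: two vertex-disjoint unbalanced cycles joined by a path meeting
them only in its two ends. -/
def IsLooseHandcuff (H : Set E) : Prop :=
  ∃ C₁ C₂ P : Set E, Ω.IsUnbalancedCycle C₁ ∧ Ω.IsUnbalancedCycle C₂ ∧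
    Disjoint (Ω.toMultiGraph.VSet C₁) (Ω.toMultiGraph.VSet C₂) ∧
    Ω.toMultiGraph.IsPath P ∧ Disjoint P (C₁ ∪ C₂) ∧
    (∃ a b, a ≠ b ∧ Ω.toMultiGraph.Ends P = {a, b} ∧
      Ω.toMultiGraph.VSet P ∩ Ω.toMultiGraph.VSet C₁ = {a} ∧
      Ω.toMultiGraph.VSet P ∩ Ω.toMultiGraph.VSet C₂ = {b}) ∧
    H = C₁ ∪ C₂ ∪ P

/-- The circuits of the frame matroid of a biased graph. -/
def FrameCircuit (X : Set E) : Prop :=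
  Ω.IsBalancedCycle X ∨ Ω.IsContraTheta X ∨ Ω.IsTightHandcuff X ∨ Ω.IsLooseHandcuff X

end BiasedGraph

/-- A biased graph (on the ground set of `M`) represents the matroid `M`:
it satisfies the theta property and the circuits of `M` are exactly its frame circuits. -/
def BiasedGraph.Represents {V : Type u} {α : Type v} (M : Matroid α)
    (Ω : BiasedGraph V ↥M.E) : Prop :=
  Ω.ThetaProperty ∧ ∀ X : Set ↥M.E, M.Circuit' (Subtype.val '' X) ↔ Ω.FrameCircuit X

/-- A matroid is frame if some biased graph represents it. -/
def Matroid.IsFrame {α : Type v} (M : Matroid α) : Prop :=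
  ∃ (V : Type v) (Ω : BiasedGraph V ↥M.E), BiasedGraph.Represents M Ω

/-- A matroidal `(M, L)` is frame if some biased graph representing `M` has all
elements of `L` as unbalanced loops. -/
def Matroid.IsFrameMatroidal {α : Type v} (M : Matroid α) (L : Set α) : Prop :=
  ∃ (V : Type v) (Ω : BiasedGraph V ↥M.E), BiasedGraph.Represents M Ω ∧
    ∀ e : ↥M.E, e.1 ∈ L → Ω.toMultiGraph.IsLoopEdge e ∧ {e} ∉ Ω.Balanced

/-! ### Auxiliary: matroid lemmas -/

namespace FrameAux

open Set Matroid

variable {α : Type*}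

theorem indep_encard_le {N : Matroid α} (hr : N.eRk' N.E = 2) {I : Set α}
    (hI : N.Indep I) : I.encard ≤ 2 := by
  have h : I.encard ≤ N.eRk' N.E :=
    le_iSup (fun J : {J : Set α // N.Indep J ∧ J ⊆ N.E} => J.1.encard)
      ⟨I, hI, hI.subset_ground⟩
  rwa [hr] at h

theorem par_trans {N : Matroid α} (hr : N.eRk' N.E = 2)
    (hloopless : ∀ e ∈ N.E, N.Indep {e}) {x y z : α}
    (hy : y ∈ N.E) (hxz : x ≠ z)
    (h1 : ¬ N.Indep {x, y}) (h2 : ¬ N.Indep {y, z}) : ¬ N.Indep {x, z} := by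
  intro h
  have hy1 : N.Indep {y} := hloopless y hy
  have hcard : ({y} : Set α).encard < ({x, z} : Set α).encard := by
    rw [Set.encard_singleton, Set.encard_pair hxz]; norm_num
  obtain ⟨e, he, hei⟩ := hy1.augment h hcard
  obtain ⟨(rfl | rfl), -⟩ := he
  · exact h1 hei
  · exact h2 (by rwa [Set.pair_comm] at hei)

theorem par_ne {N : Matroid α} (hloopless : ∀ e ∈ N.E, N.Indep {e}) {x y : α}
    (hx : x ∈ N.E) (h : ¬ N.Indep {x, y}) : x ≠ y := by
  rintro rfl
  exact h (by simpa using hloopless x hx)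

theorem circuit'_iff {N : Matroid α} (hr : N.eRk' N.E = 2)
    (hloopless : ∀ e ∈ N.E, N.Indep {e}) {C : Set α} :
    N.Circuit' C ↔
      (∃ x y, x ≠ y ∧ x ∈ N.E ∧ y ∈ N.E ∧ ¬ N.Indep {x, y} ∧ C = {x, y}) ∨
      (∃ x y z, x ≠ y ∧ x ≠ z ∧ y ≠ z ∧ x ∈ N.E ∧ y ∈ N.E ∧ z ∈ N.E ∧
        N.Indep {x, y} ∧ N.Indep {x, z} ∧ N.Indep {y, z} ∧ C = {x, y, z}) := by
  constructor
  · rintro ⟨hdep, hmin⟩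
    have hCE : C ⊆ N.E := hdep.subset_ground
    have hle3 : C.encard ≤ 3 := by
      by_contra hgt
      push_neg at hgt
      obtain ⟨t, htC, ht3⟩ := Set.exists_subset_encard_eq (le_of_lt hgt)
      have htne : t ≠ C := by rintro rfl; exact (lt_irrefl _ (ht3 ▸ hgt))
      have := indep_encard_le hr (hmin t ⟨htC, fun h => htne (htC.antisymm h)⟩)
      rw [ht3] at this
      exact absurd this (by norm_num)
    by_cases h3 : C.encard = 3
    · obtain ⟨x, y, z, hxy, hxz, hyz, rfl⟩ := Set.encard_eq_three.mp h3
      refine Or.inr ⟨x, y, z, hxy, hxz, hyz, hCE (by simp), hCE (by simp), hCE (by simp),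
        ?_, ?_, ?_, rfl⟩
      · exact hmin _ ⟨by intro w hw; simp at hw ⊢; tauto,
          fun h => hyz (by have := h (by simp : z ∈ ({x,y,z}:Set α)); simp at this; tauto)⟩
      · exact hmin _ ⟨by intro w hw; simp at hw ⊢; tauto,
          fun h => hxy (by have := h (by simp : y ∈ ({x,y,z}:Set α)); simp at this; tauto)⟩
      · exact hmin _ ⟨by intro w hw; simp at hw ⊢; tauto,
          fun h => hxy (by have := h (by simp : x ∈ ({x,y,z}:Set α)); simp at this; tauto)⟩
    · have hle2 : C.encard ≤ 2 := by
        rcases lt_or_eq_of_le hle3 with h | h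
        · exact Order.le_of_lt_add_one (by norm_num at h ⊢; exact h)
        · exact absurd h h3
      by_cases h2 : C.encard = 2
      · obtain ⟨x, y, hxy, rfl⟩ := Set.encard_eq_two.mp h2
        exact Or.inl ⟨x, y, hxy, hCE (by simp), hCE (by simp), hdep.not_indep, rfl⟩
      · exfalso
        have hle1 : C.encard ≤ 1 := by
          rcases lt_or_eq_of_le hle2 with h | h
          · exact Order.le_of_lt_add_one (by norm_num at h ⊢; exact h)
          · exact absurd h h2
        rcases Set.encard_le_one_iff_eq.mp hle1 with h | ⟨x, rfl⟩
        · exact hdep.not_indep (h ▸ N.empty_indep)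
        · exact hdep.not_indep (hloopless x (hCE rfl))
  · rintro (⟨x, y, hxy, hx, hy, hdep, rfl⟩ | ⟨x, y, z, hxy, hxz, hyz, hx, hy, hz, i1, i2, i3, rfl⟩)
    · refine ⟨⟨hdep, by simp [Set.insert_subset_iff, hx, hy]⟩, fun D hD => ?_⟩
      have : D ⊆ {x} ∨ D ⊆ {y} := by
        by_cases hxD : x ∈ D
        · left
          intro w hw
          rcases hD.1 hw with rfl | rfl
          · rfl
          · exfalso
            exact hD.2 (by intro p hp; rcases hp with rfl | rfl; exacts [hxD, hw])
        · right
          intro w hw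
          rcases hD.1 hw with rfl | rfl
          · exact absurd hw hxD
          · rfl
      rcases this with h | h
      · exact (hloopless x hx).subset h
      · exact (hloopless y hy).subset h
    · constructor
      · constructor
        · intro hi
          have := indep_encard_le hr hi
          rw [Set.encard_insert_of_notMem (by simp [hxy, hxz]), Set.encard_pair hyz] at this
          norm_num at this
        · simp [Set.insert_subset_iff, hx, hy, hz]
      · intro D hD
        obtain ⟨w, hwC, hwD⟩ := Set.exists_of_ssubset hD
        have hsub : D ⊆ ({x,y,z} : Set α) \ {w} := Set.subset_diff_singleton hD.1 hwD
        rcases hwC with rfl | rfl | rfl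
        · refine i3.subset (hsub.trans ?_)
          intro p hp; simp at hp ⊢; tauto
        · refine i2.subset (hsub.trans ?_)
          intro p hp; simp at hp ⊢; tauto
        · refine i1.subset (hsub.trans ?_)
          intro p hp; simp at hp ⊢; tauto

end FrameAux
/-! ### Auxiliary: the two-vertex graph -/

namespace FrameAux

open Set MultiGraph

variable {E : Type u}

open Classical in
noncomputable def twoGraph (A B : E → Prop) : MultiGraph (ULift.{u} Bool) E where
  fst e := if B e then ⟨true⟩ else ⟨false⟩
  snd e := if A e then ⟨false⟩ else ⟨true⟩

/-- vertex u -/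
def vu : ULift Bool := ⟨false⟩
/-- vertex v -/
def vv : ULift Bool := ⟨true⟩

theorem vu_ne_vv : vu ≠ vv := by simp [vu, vv]

theorem vert_cases (w : ULift Bool) : w = vu ∨ w = vv := by
  cases w with
  | up b => cases b <;> simp [vu, vv]

variable {A B : E → Prop} (hAB : ∀ e, ¬ (A e ∧ B e))
include hAB

omit hAB in
theorem fst_eq_vu_iff (e : E) : (twoGraph A B).fst e = vu ↔ ¬ B e := by
  simp only [twoGraph]
  split <;> simp_all [vu, vv]

omit hAB in
theorem fst_eq_vv_iff (e : E) : (twoGraph A B).fst e = vv ↔ B e := by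
  simp only [twoGraph]
  split <;> simp_all [vu, vv]

omit hAB in
theorem snd_eq_vu_iff (e : E) : (twoGraph A B).snd e = vu ↔ A e := by
  simp only [twoGraph]
  split <;> simp_all [vu, vv]

omit hAB in
theorem snd_eq_vv_iff (e : E) : (twoGraph A B).snd e = vv ↔ ¬ A e := by
  simp only [twoGraph]
  split <;> simp_all [vu, vv]

theorem inc_vu_iff (e : E) : (twoGraph A B).Inc vu e ↔ ¬ B e := by
  unfold MultiGraph.Inc
  rw [fst_eq_vu_iff, snd_eq_vu_iff]
  constructor
  · rintro (h | h)
    · exact h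
    · exact fun hB => hAB e ⟨h, hB⟩
  · exact Or.inl

theorem inc_vv_iff (e : E) : (twoGraph A B).Inc vv e ↔ ¬ A e := by
  unfold MultiGraph.Inc
  rw [fst_eq_vv_iff, snd_eq_vv_iff]
  constructor
  · rintro (h | h)
    · exact fun hA => hAB e ⟨hA, h⟩
    · exact h
  · exact Or.inr

theorem mem_vset_vu_iff (X : Set E) :
    vu ∈ (twoGraph A B).VSet X ↔ ∃ e ∈ X, ¬ B e := by
  unfold MultiGraph.VSet
  simp only [Set.mem_setOf_eq]
  constructor
  · rintro ⟨e, he, hi⟩; exact ⟨e, he, (inc_vu_iff hAB e).mp hi⟩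
  · rintro ⟨e, he, hi⟩; exact ⟨e, he, (inc_vu_iff hAB e).mpr hi⟩

theorem mem_vset_vv_iff (X : Set E) :
    vv ∈ (twoGraph A B).VSet X ↔ ∃ e ∈ X, ¬ A e := by
  unfold MultiGraph.VSet
  simp only [Set.mem_setOf_eq]
  constructor
  · rintro ⟨e, he, hi⟩; exact ⟨e, he, (inc_vv_iff hAB e).mp hi⟩
  · rintro ⟨e, he, hi⟩; exact ⟨e, he, (inc_vv_iff hAB e).mpr hi⟩

omit hAB in
theorem deg_vu (X : Set E) :
    (twoGraph A B).deg X vu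
      = {e | e ∈ X ∧ ¬ B e}.ncard + {e | e ∈ X ∧ A e}.ncard := by
  unfold MultiGraph.deg
  congr 1
  · congr 1; ext e; simp [fst_eq_vu_iff (A := A) (B := B) e]
  · congr 1; ext e; simp [snd_eq_vu_iff (A := A) (B := B) e]

omit hAB in
theorem deg_vv (X : Set E) :
    (twoGraph A B).deg X vv
      = {e | e ∈ X ∧ B e}.ncard + {e | e ∈ X ∧ ¬ A e}.ncard := by
  unfold MultiGraph.deg
  congr 1
  · congr 1; ext e; simp [fst_eq_vv_iff (A := A) (B := B) e]
  · congr 1; ext e; simp [snd_eq_vv_iff (A := A) (B := B) e]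

/-- VSet of a loop at u -/
theorem vset_loopA {e : E} (hA : A e) : (twoGraph A B).VSet {e} = {vu} := by
  ext w
  rcases vert_cases w with rfl | rfl
  · simp only [mem_vset_vu_iff hAB, Set.mem_singleton_iff]
    exact ⟨fun _ => trivial, fun _ => ⟨e, rfl, fun h => hAB e ⟨hA, h⟩⟩⟩
  · simp only [mem_vset_vv_iff hAB, Set.mem_singleton_iff]
    constructor
    · rintro ⟨f, rfl, hf⟩; exact absurd hA hf
    · intro h; exact absurd h.symm vu_ne_vv

theorem vset_loopB {e : E} (hB : B e) : (twoGraph A B).VSet {e} = {vv} := by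
  ext w
  rcases vert_cases w with rfl | rfl
  · simp only [mem_vset_vu_iff hAB, Set.mem_singleton_iff]
    constructor
    · rintro ⟨f, rfl, hf⟩; exact absurd hB hf
    · intro h; exact absurd h vu_ne_vv
  · simp only [mem_vset_vv_iff hAB, Set.mem_singleton_iff]
    exact ⟨fun _ => trivial, fun _ => ⟨e, rfl, fun h => hAB e ⟨h, hB⟩⟩⟩

/-- VSet of a nonempty set of links -/
theorem vset_links {X : Set E} (hne : X.Nonempty)
    (hX : ∀ e ∈ X, ¬ A e ∧ ¬ B e) : (twoGraph A B).VSet X = {vu, vv} := by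
  obtain ⟨e, he⟩ := hne
  ext w
  rcases vert_cases w with rfl | rfl
  · simp only [Set.mem_insert_iff, Set.mem_singleton_iff, mem_vset_vu_iff hAB]
    exact ⟨fun _ => Or.inl trivial, fun _ => ⟨e, he, (hX e he).2⟩⟩

  · simp only [Set.mem_insert_iff, Set.mem_singleton_iff, mem_vset_vv_iff hAB]
    exact ⟨fun _ => Or.inr trivial, fun _ => ⟨e, he, (hX e he).1⟩⟩

end FrameAux
namespace FrameAux

open Set MultiGraph

variable {E : Type*}

theorem ncard_sep_add_sep_not {X : Set E} (hX : X.Finite) (Q : E → Prop) :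
    {e | e ∈ X ∧ Q e}.ncard + {e | e ∈ X ∧ ¬ Q e}.ncard = X.ncard := by
  classical
  rw [← Set.ncard_union_eq (by
      simp only [Set.disjoint_left, Set.mem_setOf_eq]
      rintro e ⟨-, hq⟩ ⟨-, hnq⟩; exact hnq hq)
    (hX.subset (fun e he => he.1)) (hX.subset (fun e he => he.1))]
  congr 1
  ext e
  by_cases hq : Q e <;> simp [hq]

variable {A B : E → Prop} (hAB : ∀ e, ¬ (A e ∧ B e))
include hAB

theorem isCycle_loopA {e : E} (hA : A e) : (twoGraph A B).IsCycle {e} := by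
  refine ⟨Set.finite_singleton e, ⟨e, rfl⟩, ?_, ?_⟩
  · rintro f g rfl rfl; exact Relation.ReflTransGen.refl
  · intro w hw
    rw [vset_loopA hAB hA] at hw
    rw [hw, deg_vu]
    have h1 : {f | f ∈ ({e} : Set E) ∧ ¬ B f} = {e} := by
      ext f; simp only [Set.mem_setOf_eq, Set.mem_singleton_iff]
      exact ⟨fun h => h.1, fun h => ⟨h, by rintro hB; exact hAB f ⟨h ▸ hA, hB⟩⟩⟩
    have h2 : {f | f ∈ ({e} : Set E) ∧ A f} = {e} := by
      ext f; simp only [Set.mem_setOf_eq, Set.mem_singleton_iff]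
      exact ⟨fun h => h.1, fun h => ⟨h, h ▸ hA⟩⟩
    rw [h1, h2, Set.ncard_singleton]

theorem isCycle_loopB {e : E} (hB : B e) : (twoGraph A B).IsCycle {e} := by
  refine ⟨Set.finite_singleton e, ⟨e, rfl⟩, ?_, ?_⟩
  · rintro f g rfl rfl; exact Relation.ReflTransGen.refl
  · intro w hw
    rw [vset_loopB hAB hB] at hw
    rw [hw, deg_vv]
    have h1 : {f | f ∈ ({e} : Set E) ∧ B f} = {e} := by
      ext f; simp only [Set.mem_setOf_eq, Set.mem_singleton_iff]
      exact ⟨fun h => h.1, fun h => ⟨h, h ▸ hB⟩⟩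
    have h2 : {f | f ∈ ({e} : Set E) ∧ ¬ A f} = {e} := by
      ext f; simp only [Set.mem_setOf_eq, Set.mem_singleton_iff]
      exact ⟨fun h => h.1, fun h => ⟨h, by rintro hA; exact hAB f ⟨hA, h ▸ hB⟩⟩⟩
    rw [h1, h2, Set.ncard_singleton]

theorem isCycle_digon {e f : E} (hef : e ≠ f) (he : ¬ A e ∧ ¬ B e)
    (hf : ¬ A f ∧ ¬ B f) : (twoGraph A B).IsCycle {e, f} := by
  have hlk : ∀ g ∈ ({e, f} : Set E), ¬ A g ∧ ¬ B g := by
    rintro g (rfl | rfl) <;> assumption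
  have hadj : ∀ p ∈ ({e, f} : Set E), ∀ q ∈ ({e, f} : Set E),
      (twoGraph A B).EdgeAdj {e, f} p q := by
    intro p hp q hq
    exact ⟨hp, hq, vu, Or.inl ((fst_eq_vu_iff p).mpr (hlk p hp).2),
      Or.inl ((fst_eq_vu_iff q).mpr (hlk q hq).2)⟩
  refine ⟨(Set.finite_singleton f).insert e, ⟨e, Or.inl rfl⟩, ?_, ?_⟩
  · intro p q hp hq
    exact Relation.ReflTransGen.single (hadj p hp q hq)
  · intro w hw
    rw [vset_links hAB ⟨e, Or.inl rfl⟩ hlk] at hw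
    have hBempty : {g | g ∈ ({e, f} : Set E) ∧ B g} = ∅ := by
      ext g; simp only [Set.mem_setOf_eq, Set.mem_empty_iff_false, iff_false, not_and]
      exact fun hg => (hlk g hg).2
    have hAempty : {g | g ∈ ({e, f} : Set E) ∧ A g} = ∅ := by
      ext g; simp only [Set.mem_setOf_eq, Set.mem_empty_iff_false, iff_false, not_and]
      exact fun hg => (hlk g hg).1
    have hBfull : {g | g ∈ ({e, f} : Set E) ∧ ¬ B g} = {e, f} := by
      ext g; simp only [Set.mem_setOf_eq]
      exact ⟨fun h => h.1, fun h => ⟨h, (hlk g h).2⟩⟩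
    have hAfull : {g | g ∈ ({e, f} : Set E) ∧ ¬ A g} = {e, f} := by
      ext g; simp only [Set.mem_setOf_eq]
      exact ⟨fun h => h.1, fun h => ⟨h, (hlk g h).1⟩⟩
    rcases hw with rfl | rfl
    · rw [deg_vu, hBfull, hAempty, Set.ncard_pair hef, Set.ncard_empty]
    · rw [deg_vv, hBempty, hAfull, Set.ncard_pair hef, Set.ncard_empty]

end FrameAux
namespace FrameAux

open Set MultiGraph

variable {E : Type*} {A B : E → Prop} (hAB : ∀ e, ¬ (A e ∧ B e))
include hAB

omit hAB in
theorem eq_of_rtg {C : Set E} {e f : E}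
    (key : ∀ g, (twoGraph A B).EdgeAdj C e g → g = e)
    (h : Relation.ReflTransGen ((twoGraph A B).EdgeAdj C) e f) : f = e := by
  induction h with
  | refl => rfl
  | tail h₁ h₂ ih => rw [ih] at h₂; exact key _ h₂

theorem cycle_eq_of_loopA {C : Set E} (hC : (twoGraph A B).IsCycle C)
    {e : E} (heC : e ∈ C) (hAe : A e) : C = {e} := by
  obtain ⟨hfin, hne, hconn, hdeg⟩ := hC
  have hu : vu ∈ (twoGraph A B).VSet C :=
    (mem_vset_vu_iff hAB C).mpr ⟨e, heC, fun h => hAB e ⟨hAe, h⟩⟩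
  have h2 := hdeg vu hu
  rw [deg_vu] at h2
  have hS1fin : {f | f ∈ C ∧ ¬ B f}.Finite := hfin.subset fun f hf => hf.1
  have hS2fin : {f | f ∈ C ∧ A f}.Finite := hfin.subset fun f hf => hf.1
  have he1 : e ∈ {f | f ∈ C ∧ ¬ B f} := ⟨heC, fun h => hAB e ⟨hAe, h⟩⟩
  have he2 : e ∈ {f | f ∈ C ∧ A f} := ⟨heC, hAe⟩
  have h1pos : 0 < {f | f ∈ C ∧ ¬ B f}.ncard := (Set.ncard_pos hS1fin).mpr ⟨e, he1⟩
  have h2pos : 0 < {f | f ∈ C ∧ A f}.ncard := (Set.ncard_pos hS2fin).mpr ⟨e, he2⟩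
  have h1card : {f | f ∈ C ∧ ¬ B f}.ncard = 1 := by omega
  obtain ⟨x, hx⟩ := Set.ncard_eq_one.mp h1card
  have hxe : x = e := by have := hx ▸ he1; simp at this; exact this.symm
  rw [hxe] at hx
  have key : ∀ g, (twoGraph A B).EdgeAdj C e g → g = e := by
    rintro g ⟨-, hgC, w, hwe, hwg⟩
    have hwu : w = vu := by
      rcases hwe with h | h
      · rw [← h, fst_eq_vu_iff]; exact fun hB => hAB e ⟨hAe, hB⟩
      · rw [← h, snd_eq_vu_iff]; exact hAe
    subst hwu
    have : g ∈ {f | f ∈ C ∧ ¬ B f} := ⟨hgC, (inc_vu_iff hAB g).mp hwg⟩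
    rw [hx] at this
    simpa using this
  ext f
  simp only [Set.mem_singleton_iff]
  exact ⟨fun hf => eq_of_rtg key (hconn heC hf), fun h => h ▸ heC⟩

theorem cycle_eq_of_loopB {C : Set E} (hC : (twoGraph A B).IsCycle C)
    {e : E} (heC : e ∈ C) (hBe : B e) : C = {e} := by
  obtain ⟨hfin, hne, hconn, hdeg⟩ := hC
  have hv : vv ∈ (twoGraph A B).VSet C :=
    (mem_vset_vv_iff hAB C).mpr ⟨e, heC, fun h => hAB e ⟨h, hBe⟩⟩
  have h2 := hdeg vv hv
  rw [deg_vv] at h2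
  have hS1fin : {f | f ∈ C ∧ B f}.Finite := hfin.subset fun f hf => hf.1
  have hS2fin : {f | f ∈ C ∧ ¬ A f}.Finite := hfin.subset fun f hf => hf.1
  have he1 : e ∈ {f | f ∈ C ∧ B f} := ⟨heC, hBe⟩
  have he2 : e ∈ {f | f ∈ C ∧ ¬ A f} := ⟨heC, fun h => hAB e ⟨h, hBe⟩⟩
  have h1pos : 0 < {f | f ∈ C ∧ B f}.ncard := (Set.ncard_pos hS1fin).mpr ⟨e, he1⟩
  have h2pos : 0 < {f | f ∈ C ∧ ¬ A f}.ncard := (Set.ncard_pos hS2fin).mpr ⟨e, he2⟩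
  have h2card : {f | f ∈ C ∧ ¬ A f}.ncard = 1 := by omega
  obtain ⟨x, hx⟩ := Set.ncard_eq_one.mp h2card
  have hxe : x = e := by have := hx ▸ he2; simp at this; exact this.symm
  rw [hxe] at hx
  have key : ∀ g, (twoGraph A B).EdgeAdj C e g → g = e := by
    rintro g ⟨-, hgC, w, hwe, hwg⟩
    have hwv : w = vv := by
      rcases hwe with h | h
      · rw [← h, fst_eq_vv_iff]; exact hBe
      · rw [← h, snd_eq_vv_iff]; exact fun hA => hAB e ⟨hA, hBe⟩
    subst hwv
    have : g ∈ {f | f ∈ C ∧ ¬ A f} := ⟨hgC, (inc_vv_iff hAB g).mp hwg⟩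
    rw [hx] at this
    simpa using this
  ext f
  simp only [Set.mem_singleton_iff]
  exact ⟨fun hf => eq_of_rtg key (hconn heC hf), fun h => h ▸ heC⟩

theorem isCycle_iff {C : Set E} :
    (twoGraph A B).IsCycle C ↔
      (∃ e, (A e ∨ B e) ∧ C = {e}) ∨
      (∃ e f, e ≠ f ∧ (¬ A e ∧ ¬ B e) ∧ (¬ A f ∧ ¬ B f) ∧ C = {e, f}) := by
  constructor
  · intro hC
    by_cases hA : ∃ e ∈ C, A e
    · obtain ⟨e, heC, hAe⟩ := hA
      exact Or.inl ⟨e, Or.inl hAe, cycle_eq_of_loopA hAB hC heC hAe⟩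
    by_cases hB : ∃ e ∈ C, B e
    · obtain ⟨e, heC, hBe⟩ := hB
      exact Or.inl ⟨e, Or.inr hBe, cycle_eq_of_loopB hAB hC heC hBe⟩
    push_neg at hA hB
    obtain ⟨hfin, hne, hconn, hdeg⟩ := hC
    obtain ⟨e₀, he₀⟩ := hne
    have hu : vu ∈ (twoGraph A B).VSet C :=
      (mem_vset_vu_iff hAB C).mpr ⟨e₀, he₀, hB e₀ he₀⟩
    have h2 := hdeg vu hu
    rw [deg_vu] at h2
    have hfull : {f | f ∈ C ∧ ¬ B f} = C := by
      ext f; exact ⟨fun h => h.1, fun h => ⟨h, hB f h⟩⟩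
    have hempty : {f | f ∈ C ∧ A f} = ∅ := by
      ext f
      simp only [Set.mem_setOf_eq, Set.mem_empty_iff_false, iff_false, not_and]
      exact hA f
    rw [hfull, hempty, Set.ncard_empty, Nat.add_zero] at h2
    obtain ⟨e, f, hef, rfl⟩ := Set.ncard_eq_two.mp h2
    exact Or.inr ⟨e, f, hef, ⟨hA e (Or.inl rfl), hB e (Or.inl rfl)⟩,
      ⟨hA f (Or.inr rfl), hB f (Or.inr rfl)⟩, rfl⟩
  · rintro (⟨e, (hAe | hBe), rfl⟩ | ⟨e, f, hef, he, hf, rfl⟩)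
    · exact isCycle_loopA hAB hAe
    · exact isCycle_loopB hAB hBe
    · exact isCycle_digon hAB hef he hf

theorem isPath_singleton_link {g : E} (hg : ¬ A g ∧ ¬ B g) :
    (twoGraph A B).IsPath {g} ∧ (twoGraph A B).Ends {g} = {vu, vv} := by
  have hBfull : {f | f ∈ ({g} : Set E) ∧ ¬ B f} = {g} := by
    ext p; simp only [Set.mem_setOf_eq, Set.mem_singleton_iff]
    exact ⟨fun h => h.1, fun h => ⟨h, h ▸ hg.2⟩⟩
  have hAfull : {f | f ∈ ({g} : Set E) ∧ ¬ A f} = {g} := by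
    ext p; simp only [Set.mem_setOf_eq, Set.mem_singleton_iff]
    exact ⟨fun h => h.1, fun h => ⟨h, h ▸ hg.1⟩⟩
  have hBempty : {f | f ∈ ({g} : Set E) ∧ B f} = ∅ := by
    ext p
    simp only [Set.mem_setOf_eq, Set.mem_empty_iff_false, iff_false, not_and,
      Set.mem_singleton_iff]
    rintro rfl; exact hg.2
  have hAempty : {f | f ∈ ({g} : Set E) ∧ A f} = ∅ := by
    ext p
    simp only [Set.mem_setOf_eq, Set.mem_empty_iff_false, iff_false, not_and,
      Set.mem_singleton_iff]
    rintro rfl; exact hg.1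
  have hdu : (twoGraph A B).deg {g} vu = 1 := by
    rw [deg_vu, hBfull, hAempty, Set.ncard_singleton, Set.ncard_empty]
  have hdv : (twoGraph A B).deg {g} vv = 1 := by
    rw [deg_vv, hBempty, hAfull, Set.ncard_singleton, Set.ncard_empty]
  have hvs : (twoGraph A B).VSet {g} = {vu, vv} :=
    vset_links hAB ⟨g, rfl⟩ (by rintro p rfl; exact hg)
  have hends : (twoGraph A B).Ends {g} = {vu, vv} := by
    unfold MultiGraph.Ends
    ext w
    rcases vert_cases w with rfl | rfl <;>
      simp [Set.mem_setOf_eq, hvs, hdu, hdv]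
  refine ⟨⟨Set.finite_singleton g, ⟨g, rfl⟩, ?_, ?_, ?_⟩, hends⟩
  · rintro p q rfl rfl; exact Relation.ReflTransGen.refl
  · intro w hw
    rw [hvs] at hw
    rcases hw with rfl | rfl
    · rw [hdu]; norm_num
    · rw [hdv]; norm_num
  · rw [hends, Set.ncard_pair vu_ne_vv]

theorem path_eq_singleton {P : Set E} (hP : (twoGraph A B).IsPath P)
    (hu : (twoGraph A B).deg P vu = 1) (hv : (twoGraph A B).deg P vv = 1) :
    ∃ g, (¬ A g ∧ ¬ B g) ∧ P = {g} := by
  obtain ⟨hfin, hne, -, -, -⟩ := hP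
  have hpartB := ncard_sep_add_sep_not hfin B
  have hpartA := ncard_sep_add_sep_not hfin A
  rw [deg_vu] at hu
  rw [deg_vv] at hv
  have hcard : P.ncard = 1 := by omega
  obtain ⟨g, rfl⟩ := Set.ncard_eq_one.mp hcard
  refine ⟨g, ⟨?_, ?_⟩, rfl⟩
  · intro hAg
    have h1 : {f | f ∈ ({g} : Set E) ∧ ¬ B f} = {g} := by
      ext p; simp only [Set.mem_setOf_eq, Set.mem_singleton_iff]
      exact ⟨fun h => h.1, fun h => ⟨h, fun hB => hAB p ⟨h ▸ hAg, hB⟩⟩⟩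
    have h2 : {f | f ∈ ({g} : Set E) ∧ A f} = {g} := by
      ext p; simp only [Set.mem_setOf_eq, Set.mem_singleton_iff]
      exact ⟨fun h => h.1, fun h => ⟨h, h ▸ hAg⟩⟩
    rw [h1, h2, Set.ncard_singleton] at hu
    omega
  · intro hBg
    have h1 : {f | f ∈ ({g} : Set E) ∧ B f} = {g} := by
      ext p; simp only [Set.mem_setOf_eq, Set.mem_singleton_iff]
      exact ⟨fun h => h.1, fun h => ⟨h, h ▸ hBg⟩⟩
    have h2 : {f | f ∈ ({g} : Set E) ∧ ¬ A f} = {g} := by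
      ext p; simp only [Set.mem_setOf_eq, Set.mem_singleton_iff]
      exact ⟨fun h => h.1, fun h => ⟨h, fun hA => hAB p ⟨hA, h ▸ hBg⟩⟩⟩
    rw [h1, h2, Set.ncard_singleton] at hv
    omega

end FrameAux
namespace FrameAux

open Set

variable {γ : Type*}

theorem mem_pair_iff {x e f : γ} : x ∈ ({e, f} : Set γ) ↔ x = e ∨ x = f := by simp

theorem pair_eq_of_mem {x y e f : γ} (hx : x ∈ ({e, f} : Set γ))
    (hy : y ∈ ({e, f} : Set γ)) (hxy : x ≠ y) : ({e, f} : Set γ) = {x, y} := by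
  rcases mem_pair_iff.mp hx with rfl | rfl <;> rcases mem_pair_iff.mp hy with rfl | rfl
  · exact absurd rfl hxy
  · rfl
  · exact Set.pair_comm _ _
  · exact absurd rfl hxy

theorem pair_cases_of_eq {e f p q : γ} (h : ({e, f} : Set γ) = {p, q}) (hef : e ≠ f) :
    (e = p ∧ f = q) ∨ (e = q ∧ f = p) := by
  have he : e ∈ ({p, q} : Set γ) := h ▸ (Or.inl rfl : e ∈ ({e, f} : Set γ))
  have hf : f ∈ ({p, q} : Set γ) := h ▸ (Or.inr rfl : f ∈ ({e, f} : Set γ))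
  rcases mem_pair_iff.mp he with rfl | rfl <;> rcases mem_pair_iff.mp hf with rfl | rfl
  · exact absurd rfl hef
  · exact Or.inl ⟨rfl, rfl⟩
  · exact Or.inr ⟨rfl, rfl⟩
  · exact absurd rfl hef

theorem sd_contra {C₁ C₂ : Set γ} {p q : γ}
    (hΔ : ({p, q} : Set γ) = symmDiff C₁ C₂) (hpq : p ≠ q)
    (hp : p ∈ C₁ ∧ p ∉ C₂) (hq : q ∈ C₁ ∧ q ∉ C₂)
    (hC1 : ∃ e f, e ≠ f ∧ C₁ = {e, f}) (hC2 : C₂.Nonempty) : False := by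
  obtain ⟨e, f, hef, rfl⟩ := hC1
  obtain ⟨g, hg⟩ := hC2
  have hC1eq : ({e, f} : Set γ) = {p, q} := pair_eq_of_mem hp.1 hq.1 hpq
  have hgC1 : g ∈ ({e, f} : Set γ) := by
    by_contra hng
    have : g ∈ symmDiff ({e, f} : Set γ) C₂ := Set.mem_symmDiff.mpr (Or.inr ⟨hg, hng⟩)
    rw [← hΔ] at this
    rcases mem_pair_iff.mp this with rfl | rfl
    · exact hng (hC1eq ▸ (Or.inl rfl : g ∈ ({g, q} : Set γ)))
    · exact hng (hC1eq ▸ (Or.inr rfl : g ∈ ({p, g} : Set γ)))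
  have : g ∈ symmDiff ({e, f} : Set γ) C₂ := by
    rw [← hΔ]
    rw [hC1eq] at hgC1
    exact hgC1
  rcases Set.mem_symmDiff.mp this with ⟨-, hn⟩ | ⟨-, hn⟩
  · exact hn hg
  · exact hn hgC1

theorem sd_main {C₁ C₂ : Set γ} {p q : γ}
    (hΔ : ({p, q} : Set γ) = symmDiff C₁ C₂) (hpq : p ≠ q)
    (hp : p ∈ C₁ ∧ p ∉ C₂) (hq : q ∈ C₂ ∧ q ∉ C₁)
    (hC1 : ∃ e f, e ≠ f ∧ C₁ = {e, f}) (hC2 : ∃ g h, g ≠ h ∧ C₂ = {g, h}) :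
    ∃ w, C₁ = {p, w} ∧ C₂ = {w, q} ∧ w ≠ p ∧ w ≠ q := by
  obtain ⟨e, f, hef, rfl⟩ := hC1
  obtain ⟨g, h, hgh, rfl⟩ := hC2
  -- find the other element w of C₁
  obtain ⟨w, hC1p, hwp⟩ : ∃ w, ({e, f} : Set γ) = {p, w} ∧ w ≠ p := by
    rcases mem_pair_iff.mp hp.1 with rfl | rfl
    · exact ⟨f, rfl, fun h => hef h.symm⟩
    · exact ⟨e, Set.pair_comm e p, fun h => hef h⟩
  have hwC1 : w ∈ ({e, f} : Set γ) := hC1p ▸ (Or.inr rfl : w ∈ ({p, w} : Set γ))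
  have hwq : w ≠ q := by
    rintro rfl
    exact hq.2 hwC1
  have hwC2 : w ∈ ({g, h} : Set γ) := by
    by_contra hn
    have : w ∈ symmDiff ({e, f} : Set γ) ({g, h} : Set γ) :=
      Set.mem_symmDiff.mpr (Or.inl ⟨hwC1, hn⟩)
    rw [← hΔ] at this
    rcases mem_pair_iff.mp this with rfl | rfl
    · exact hwp rfl
    · exact hwq rfl
  exact ⟨w, hC1p, (pair_eq_of_mem hwC2 hq.1 hwq), hwp, hwq⟩

theorem sd_structure {C₁ C₂ C₃ : Set γ}
    (hΔ : C₃ = symmDiff C₁ C₂)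
    (hC1 : ∃ e f, e ≠ f ∧ C₁ = {e, f}) (hC2 : ∃ g h, g ≠ h ∧ C₂ = {g, h})
    (hC3 : ∃ p q, p ≠ q ∧ C₃ = {p, q}) :
    ∃ x w y, C₁ = {x, w} ∧ C₂ = {w, y} ∧ C₃ = {x, y} ∧ x ≠ w ∧ w ≠ y ∧ x ≠ y := by
  obtain ⟨p, q, hpq, rfl⟩ := hC3
  have hpΔ : p ∈ symmDiff C₁ C₂ := hΔ ▸ (Or.inl rfl : p ∈ ({p, q} : Set γ))
  have hqΔ : q ∈ symmDiff C₁ C₂ := hΔ ▸ (Or.inr rfl : q ∈ ({p, q} : Set γ))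
  have hC2ne : C₂.Nonempty := by obtain ⟨g, h, -, rfl⟩ := hC2; exact ⟨g, Or.inl rfl⟩
  have hC1ne : C₁.Nonempty := by obtain ⟨e, f, -, rfl⟩ := hC1; exact ⟨e, Or.inl rfl⟩
  rcases Set.mem_symmDiff.mp hpΔ with hp | hp <;> rcases Set.mem_symmDiff.mp hqΔ with hq | hq
  · exact absurd (sd_contra hΔ hpq hp hq hC1 hC2ne) not_false
  · obtain ⟨w, h1, h2, hwp, hwq⟩ := sd_main hΔ hpq hp hq hC1 hC2
    exact ⟨p, w, q, h1, h2, rfl, fun h => hwp h.symm, hwq, hpq⟩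
  · obtain ⟨w, h1, h2, hwp, hwq⟩ := sd_main (C₁ := C₂) (C₂ := C₁)
      (by rw [hΔ, symmDiff_comm]) hpq hp hq hC2 hC1
    exact ⟨q, w, p, by rw [h2, Set.pair_comm], by rw [h1, Set.pair_comm],
      Set.pair_comm p q, fun h => hwq h.symm, hwp, Ne.symm hpq⟩
  · exact absurd (sd_contra (by rw [hΔ, symmDiff_comm]) hpq hp hq hC2 hC1ne) not_false

end FrameAux
namespace FrameAux

open Set MultiGraph BiasedGraph

variable {α : Type u} (N : Matroid α) (a b : α)

def ClA (e : ↥N.E) : Prop := e.1 = a ∨ ¬ N.Indep {a, e.1}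

def ClB (e : ↥N.E) : Prop := e.1 = b ∨ ¬ N.Indep {b, e.1}

noncomputable def theBG : BiasedGraph (ULift.{u} Bool) ↥N.E where
  toMultiGraph := twoGraph (ClA N a) (ClB N b)
  Balanced := {C | ∃ e f : ↥N.E, e ≠ f ∧ (¬ ClA N a e ∧ ¬ ClB N b e) ∧
    (¬ ClA N a f ∧ ¬ ClB N b f) ∧ ¬ N.Indep {e.1, f.1} ∧ C = {e, f}}

theorem theBG_mg : (theBG N a b).toMultiGraph = twoGraph (ClA N a) (ClB N b) := rfl

theorem vne {e f : ↥N.E} (h : e ≠ f) : e.1 ≠ f.1 := fun h' => h (Subtype.ext h')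

variable {N a b} in
theorem vnei {e f : ↥N.E} (h : e ≠ f) : e.1 ≠ f.1 := fun h' => h (Subtype.ext h')

variable {N a b}
variable (hr : N.eRk' N.E = 2) (hl : ∀ e ∈ N.E, N.Indep {e})
  (ha : a ∈ N.E) (hb : b ∈ N.E) (hab : a ≠ b) (hiab : N.Indep {a, b})
include hr hl ha hb hab hiab

theorem clAB (e : ↥N.E) : ¬ (ClA N a e ∧ ClB N b e) := by
  rintro ⟨hA, hB⟩
  rcases hA with hA | hA
  · rcases hB with hB | hB
    · exact hab (hA ▸ hB ▸ rfl)
    · rw [hA, Set.pair_comm] at hB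
      exact hB hiab
  · rcases hB with hB | hB
    · rw [hB] at hA
      exact hA hiab
    · rw [Set.pair_comm] at hB
      exact par_trans hr hl e.2 hab hA hB hiab

theorem clA_of_par {e f : ↥N.E} (hA : ClA N a e) (hpar : ¬ N.Indep {e.1, f.1}) :
    ClA N a f := by
  rcases hA with hA | hA
  · exact Or.inr (hA ▸ hpar)
  · by_cases hfa : f.1 = a
    · exact Or.inl hfa
    · exact Or.inr (par_trans hr hl e.2 (Ne.symm hfa) hA hpar)

theorem clB_of_par {e f : ↥N.E} (hB : ClB N b e) (hpar : ¬ N.Indep {e.1, f.1}) :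
    ClB N b f := by
  rcases hB with hB | hB
  · exact Or.inr (hB ▸ hpar)
  · by_cases hfb : f.1 = b
    · exact Or.inl hfb
    · exact Or.inr (par_trans hr hl e.2 (Ne.symm hfb) hB hpar)

theorem par_of_clA_clA {e f : ↥N.E} (hA : ClA N a e) (hA' : ClA N a f)
    (hef : e ≠ f) : ¬ N.Indep {e.1, f.1} := by
  rcases hA with hA | hA <;> rcases hA' with hA' | hA'
  · exact absurd (Subtype.ext (hA ▸ hA' ▸ rfl)) hef
  · rw [hA]; exact hA'
  · rw [hA', Set.pair_comm]; exact hA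
  · rw [Set.pair_comm] at hA
    exact par_trans hr hl ha (vnei hef) hA hA'

theorem par_of_clB_clB {e f : ↥N.E} (hB : ClB N b e) (hB' : ClB N b f)
    (hef : e ≠ f) : ¬ N.Indep {e.1, f.1} := by
  rcases hB with hB | hB <;> rcases hB' with hB' | hB'
  · exact absurd (Subtype.ext (hB ▸ hB' ▸ rfl)) hef
  · rw [hB]; exact hB'
  · rw [hB', Set.pair_comm]; exact hB
  · rw [Set.pair_comm] at hB
    exact par_trans hr hl hb (vnei hef) hB hB'

omit hr hl ha hb hab hiab in
theorem not_bal_singleton (e : ↥N.E) : ({e} : Set ↥N.E) ∉ (theBG N a b).Balanced := by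
  rintro ⟨p, q, hpq, -, -, -, hC⟩
  have hp : p ∈ ({e} : Set ↥N.E) := hC ▸ (Or.inl rfl : p ∈ ({p, q} : Set ↥N.E))
  have hq : q ∈ ({e} : Set ↥N.E) := hC ▸ (Or.inr rfl : q ∈ ({p, q} : Set ↥N.E))
  rw [Set.mem_singleton_iff] at hp hq
  exact hpq (hp.trans hq.symm)

omit hr hl ha hb hab hiab in
theorem bal_of {e f : ↥N.E} (hef : e ≠ f) (he : ¬ ClA N a e ∧ ¬ ClB N b e)
    (hf : ¬ ClA N a f ∧ ¬ ClB N b f) (hpar : ¬ N.Indep {e.1, f.1}) :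
    ({e, f} : Set ↥N.E) ∈ (theBG N a b).Balanced :=
  ⟨e, f, hef, he, hf, hpar, rfl⟩

omit hr hl ha hb hab hiab in
theorem not_bal_of_indep {e f : ↥N.E} (hef : e ≠ f) (hind : N.Indep {e.1, f.1}) :
    ({e, f} : Set ↥N.E) ∉ (theBG N a b).Balanced := by
  rintro ⟨p, q, hpq, -, -, hpar, hC⟩
  rcases pair_cases_of_eq hC.symm hpq with ⟨rfl, rfl⟩ | ⟨rfl, rfl⟩
  · exact hpar hind
  · rw [Set.pair_comm] at hpar
    exact hpar hind

omit hr hl ha hb hab hiab in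
theorem par_transfer {e f x w : ↥N.E} (heq : ({e, f} : Set ↥N.E) = {x, w})
    (hef : e ≠ f) (hpar : ¬ N.Indep {e.1, f.1}) : ¬ N.Indep {x.1, w.1} := by
  rcases pair_cases_of_eq heq hef with ⟨rfl, rfl⟩ | ⟨rfl, rfl⟩
  · exact hpar
  · rw [Set.pair_comm]; exact hpar

end FrameAux
namespace FrameAux

open Set MultiGraph BiasedGraph

variable {α : Type u} {N : Matroid α} {a b : α}
variable (hr : N.eRk' N.E = 2) (hl : ∀ e ∈ N.E, N.Indep {e})
  (ha : a ∈ N.E) (hb : b ∈ N.E) (hab : a ≠ b) (hiab : N.Indep {a, b})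
include hr hl ha hb hab hiab

theorem frame_two_A {e f : ↥N.E} (hef : e ≠ f) (hA : ClA N a e) (hA' : ClA N a f)
    {X : Set ↥N.E} (hX : X = {e, f}) : (theBG N a b).FrameCircuit X := by
  have hAB' := clAB hr hl ha hb hab hiab
  refine Or.inr (Or.inr (Or.inl ⟨{e}, {f}, ⟨?_, ?_⟩, ⟨?_, ?_⟩, ?_, ⟨vu, ?_⟩, ?_⟩))
  · exact isCycle_loopA hAB' hA
  · exact not_bal_singleton e
  · exact isCycle_loopA hAB' hA'
  · exact not_bal_singleton f
  · exact Set.disjoint_singleton.mpr hef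
  · show (twoGraph (ClA N a) (ClB N b)).VSet {e} ∩ (twoGraph (ClA N a) (ClB N b)).VSet {f} = {vu}
    rw [vset_loopA hAB' hA, vset_loopA hAB' hA', Set.inter_self]
  · rw [hX]; ext x; simp only [Set.mem_insert_iff, Set.mem_singleton_iff, Set.mem_union]; try tauto

theorem frame_two_B {e f : ↥N.E} (hef : e ≠ f) (hB : ClB N b e) (hB' : ClB N b f)
    {X : Set ↥N.E} (hX : X = {e, f}) : (theBG N a b).FrameCircuit X := by
  have hAB' := clAB hr hl ha hb hab hiab
  refine Or.inr (Or.inr (Or.inl ⟨{e}, {f}, ⟨?_, ?_⟩, ⟨?_, ?_⟩, ?_, ⟨vv, ?_⟩, ?_⟩))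
  · exact isCycle_loopB hAB' hB
  · exact not_bal_singleton e
  · exact isCycle_loopB hAB' hB'
  · exact not_bal_singleton f
  · exact Set.disjoint_singleton.mpr hef
  · show (twoGraph (ClA N a) (ClB N b)).VSet {e} ∩ (twoGraph (ClA N a) (ClB N b)).VSet {f} = {vv}
    rw [vset_loopB hAB' hB, vset_loopB hAB' hB', Set.inter_self]
  · rw [hX]; ext x; simp only [Set.mem_insert_iff, Set.mem_singleton_iff, Set.mem_union]; try tauto

theorem frame_two_L {e f : ↥N.E} (hef : e ≠ f) (he : ¬ ClA N a e ∧ ¬ ClB N b e)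
    (hf : ¬ ClA N a f ∧ ¬ ClB N b f) (hpar : ¬ N.Indep {e.1, f.1})
    {X : Set ↥N.E} (hX : X = {e, f}) : (theBG N a b).FrameCircuit X := by
  subst hX
  have hAB' := clAB hr hl ha hb hab hiab
  exact Or.inl ⟨isCycle_digon hAB' hef he hf, bal_of hef he hf hpar⟩

theorem frame_LLL {e f g : ↥N.E} (hef : e ≠ f) (heg : e ≠ g) (hfg : f ≠ g)
    (he : ¬ ClA N a e ∧ ¬ ClB N b e) (hf : ¬ ClA N a f ∧ ¬ ClB N b f)
    (hg : ¬ ClA N a g ∧ ¬ ClB N b g)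
    (hief : N.Indep {e.1, f.1}) (hieg : N.Indep {e.1, g.1}) (hifg : N.Indep {f.1, g.1})
    {X : Set ↥N.E} (hX : X = {e, f, g}) : (theBG N a b).FrameCircuit X := by
  have hAB' := clAB hr hl ha hb hab hiab
  refine Or.inr (Or.inl ⟨{e, f}, {f, g}, {e, g}, ⟨?_, ?_⟩, ⟨?_, ?_⟩, ⟨?_, ?_⟩, ?_, ?_⟩)
  · exact isCycle_digon hAB' hef he hf
  · exact not_bal_of_indep hef hief
  · exact isCycle_digon hAB' hfg hf hg
  · exact not_bal_of_indep hfg hifg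
  · exact isCycle_digon hAB' heg he hg
  · exact not_bal_of_indep heg hieg
  · ext x
    simp only [Set.mem_symmDiff, mem_pair_iff]
    constructor
    · rintro (rfl | rfl)
      · exact Or.inl ⟨Or.inl rfl, by rintro (rfl | rfl); exacts [hef rfl, heg rfl]⟩
      · exact Or.inr ⟨Or.inr rfl, by rintro (rfl | rfl); exacts [heg rfl, hfg rfl]⟩
    · rintro (⟨(rfl | rfl), hn⟩ | ⟨(rfl | rfl), hn⟩)
      · exact Or.inl rfl
      · exact absurd (Or.inl rfl) hn
      · exact absurd (Or.inr rfl) hn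
      · exact Or.inr rfl
  · rw [hX]; ext x; simp only [Set.mem_insert_iff, Set.mem_singleton_iff, Set.mem_union]
    try tauto

theorem frame_ALL {e f g : ↥N.E} (hef : e ≠ f) (heg : e ≠ g) (hfg : f ≠ g)
    (hA : ClA N a e) (hf : ¬ ClA N a f ∧ ¬ ClB N b f) (hg : ¬ ClA N a g ∧ ¬ ClB N b g)
    (hifg : N.Indep {f.1, g.1})
    {X : Set ↥N.E} (hX : X = {e, f, g}) : (theBG N a b).FrameCircuit X := by
  have hAB' := clAB hr hl ha hb hab hiab
  refine Or.inr (Or.inr (Or.inl ⟨{e}, {f, g}, ⟨?_, ?_⟩, ⟨?_, ?_⟩, ?_, ⟨vu, ?_⟩, ?_⟩))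
  · exact isCycle_loopA hAB' hA
  · exact not_bal_singleton e
  · exact isCycle_digon hAB' hfg hf hg
  · exact not_bal_of_indep hfg hifg
  · rw [Set.disjoint_singleton_left]
    rintro (rfl | rfl); exacts [hef rfl, heg rfl]
  · show (twoGraph (ClA N a) (ClB N b)).VSet {e} ∩
        (twoGraph (ClA N a) (ClB N b)).VSet {f, g} = {vu}
    rw [vset_loopA hAB' hA, vset_links hAB' ⟨f, Or.inl rfl⟩
      (by rintro p (rfl | rfl); exacts [hf, hg])]
    ext w; simp only [Set.mem_inter_iff, Set.mem_singleton_iff, Set.mem_insert_iff]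
    constructor
    · rintro ⟨rfl, -⟩; rfl
    · rintro rfl; exact ⟨rfl, Or.inl rfl⟩
  · rw [hX]; ext x; simp only [Set.mem_insert_iff, Set.mem_singleton_iff, Set.mem_union]
    try tauto

theorem frame_BLL {e f g : ↥N.E} (hef : e ≠ f) (heg : e ≠ g) (hfg : f ≠ g)
    (hB : ClB N b e) (hf : ¬ ClA N a f ∧ ¬ ClB N b f) (hg : ¬ ClA N a g ∧ ¬ ClB N b g)
    (hifg : N.Indep {f.1, g.1})
    {X : Set ↥N.E} (hX : X = {e, f, g}) : (theBG N a b).FrameCircuit X := by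
  have hAB' := clAB hr hl ha hb hab hiab
  refine Or.inr (Or.inr (Or.inl ⟨{e}, {f, g}, ⟨?_, ?_⟩, ⟨?_, ?_⟩, ?_, ⟨vv, ?_⟩, ?_⟩))
  · exact isCycle_loopB hAB' hB
  · exact not_bal_singleton e
  · exact isCycle_digon hAB' hfg hf hg
  · exact not_bal_of_indep hfg hifg
  · rw [Set.disjoint_singleton_left]
    rintro (rfl | rfl); exacts [hef rfl, heg rfl]
  · show (twoGraph (ClA N a) (ClB N b)).VSet {e} ∩
        (twoGraph (ClA N a) (ClB N b)).VSet {f, g} = {vv}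
    rw [vset_loopB hAB' hB, vset_links hAB' ⟨f, Or.inl rfl⟩
      (by rintro p (rfl | rfl); exacts [hf, hg])]
    ext w; simp only [Set.mem_inter_iff, Set.mem_singleton_iff, Set.mem_insert_iff]
    constructor
    · rintro ⟨rfl, -⟩; rfl
    · rintro rfl; exact ⟨rfl, Or.inr rfl⟩
  · rw [hX]; ext x; simp only [Set.mem_insert_iff, Set.mem_singleton_iff, Set.mem_union]
    try tauto

theorem frame_ABL {e f g : ↥N.E} (hef : e ≠ f) (heg : e ≠ g) (hfg : f ≠ g)
    (hA : ClA N a e) (hB : ClB N b f) (hg : ¬ ClA N a g ∧ ¬ ClB N b g)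
    {X : Set ↥N.E} (hX : X = {e, f, g}) : (theBG N a b).FrameCircuit X := by
  have hAB' := clAB hr hl ha hb hab hiab
  obtain ⟨hpath, hends⟩ := isPath_singleton_link hAB' (g := g) hg
  refine Or.inr (Or.inr (Or.inr ⟨{e}, {f}, {g}, ⟨?_, ?_⟩, ⟨?_, ?_⟩, ?_, ?_, ?_,
    ⟨vu, vv, vu_ne_vv, ?_, ?_, ?_⟩, ?_⟩))
  · exact isCycle_loopA hAB' hA
  · exact not_bal_singleton e
  · exact isCycle_loopB hAB' hB
  · exact not_bal_singleton f
  · show Disjoint ((twoGraph (ClA N a) (ClB N b)).VSet {e})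
      ((twoGraph (ClA N a) (ClB N b)).VSet {f})
    rw [vset_loopA hAB' hA, vset_loopB hAB' hB]
    exact Set.disjoint_singleton.mpr vu_ne_vv
  · exact hpath
  · rw [Set.disjoint_singleton_left]
    rintro (rfl | rfl); exacts [heg rfl, hfg rfl]
  · exact hends
  · show (twoGraph (ClA N a) (ClB N b)).VSet {g} ∩
        (twoGraph (ClA N a) (ClB N b)).VSet {e} = {vu}
    rw [vset_loopA hAB' hA, vset_links (X := {g}) hAB' ⟨g, rfl⟩ (by rintro p hp; rw [Set.mem_singleton_iff] at hp; rw [hp]; exact hg)]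
    ext w; simp only [Set.mem_inter_iff, Set.mem_singleton_iff, Set.mem_insert_iff]
    constructor
    · rintro ⟨-, rfl⟩; rfl
    · rintro rfl; exact ⟨Or.inl rfl, rfl⟩
  · show (twoGraph (ClA N a) (ClB N b)).VSet {g} ∩
        (twoGraph (ClA N a) (ClB N b)).VSet {f} = {vv}
    rw [vset_loopB hAB' hB, vset_links (X := {g}) hAB' ⟨g, rfl⟩ (by rintro p hp; rw [Set.mem_singleton_iff] at hp; rw [hp]; exact hg)]
    ext w; simp only [Set.mem_inter_iff, Set.mem_singleton_iff, Set.mem_insert_iff]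
    constructor
    · rintro ⟨-, rfl⟩; rfl
    · rintro rfl; exact ⟨Or.inr rfl, rfl⟩
  · rw [hX]; ext x; simp only [Set.mem_insert_iff, Set.mem_singleton_iff, Set.mem_union]
    try tauto

end FrameAux
namespace FrameAux

open Set MultiGraph BiasedGraph

variable {α : Type u} {N : Matroid α} {a b : α}

theorem tri (e : ↥N.E) : ClA N a e ∨ ClB N b e ∨ (¬ ClA N a e ∧ ¬ ClB N b e) := by
  by_cases h1 : ClA N a e
  · exact Or.inl h1
  by_cases h2 : ClB N b e
  · exact Or.inr (Or.inl h2)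
  exact Or.inr (Or.inr ⟨h1, h2⟩)

theorem image_pair_inv {X : Set ↥N.E} {x y : α} (hx : x ∈ N.E) (hy : y ∈ N.E)
    (h : Subtype.val '' X = {x, y}) : X = {⟨x, hx⟩, ⟨y, hy⟩} := by
  apply (Set.image_injective.mpr (Subtype.val_injective (p := (· ∈ N.E))))
  rw [h]
  simp [Set.image_insert_eq]

theorem image_triple_inv {X : Set ↥N.E} {x y z : α} (hx : x ∈ N.E) (hy : y ∈ N.E)
    (hz : z ∈ N.E) (h : Subtype.val '' X = {x, y, z}) :
    X = {⟨x, hx⟩, ⟨y, hy⟩, ⟨z, hz⟩} := by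
  apply (Set.image_injective.mpr (Subtype.val_injective (p := (· ∈ N.E))))
  rw [h]
  simp [Set.image_insert_eq]

theorem link_of_mem {x e f : ↥N.E} (hm : x ∈ ({e, f} : Set ↥N.E))
    (he : ¬ ClA N a e ∧ ¬ ClB N b e) (hf : ¬ ClA N a f ∧ ¬ ClB N b f) :
    ¬ ClA N a x ∧ ¬ ClB N b x := by
  rcases mem_pair_iff.mp hm with rfl | rfl <;> assumption

variable (hr : N.eRk' N.E = 2) (hl : ∀ e ∈ N.E, N.Indep {e})
  (ha : a ∈ N.E) (hb : b ∈ N.E) (hab : a ≠ b) (hiab : N.Indep {a, b})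
include hr hl ha hb hab hiab

theorem indep_of_unbal {e f : ↥N.E} (hnb : ({e, f} : Set ↥N.E) ∉ (theBG N a b).Balanced)
    (hef : e ≠ f) (he : ¬ ClA N a e ∧ ¬ ClB N b e) (hf : ¬ ClA N a f ∧ ¬ ClB N b f) :
    N.Indep {e.1, f.1} := by
  by_contra hi
  exact hnb (bal_of hef he hf hi)

theorem indep_A_link {e f : ↥N.E} (hA : ClA N a e) (hf : ¬ ClA N a f ∧ ¬ ClB N b f) :
    N.Indep {e.1, f.1} := by
  by_contra hi
  exact hf.1 (clA_of_par hr hl ha hb hab hiab hA hi)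

theorem indep_B_link {e f : ↥N.E} (hB : ClB N b e) (hf : ¬ ClA N a f ∧ ¬ ClB N b f) :
    N.Indep {e.1, f.1} := by
  by_contra hi
  exact hf.2 (clB_of_par hr hl ha hb hab hiab hB hi)

theorem indep_A_B {e f : ↥N.E} (hA : ClA N a e) (hB : ClB N b f) :
    N.Indep {e.1, f.1} := by
  by_contra hi
  exact clAB hr hl ha hb hab hiab f ⟨clA_of_par hr hl ha hb hab hiab hA hi, hB⟩

omit hr hl ha hb hab hiab in
theorem ne_of_A_link {e f : ↥N.E} (hA : ClA N a e) (hf : ¬ ClA N a f ∧ ¬ ClB N b f) :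
    e ≠ f := by rintro rfl; exact hf.1 hA

omit hr hl ha hb hab hiab in
theorem ne_of_B_link {e f : ↥N.E} (hB : ClB N b e) (hf : ¬ ClA N a f ∧ ¬ ClB N b f) :
    e ≠ f := by rintro rfl; exact hf.2 hB

theorem ne_of_A_B {e f : ↥N.E} (hA : ClA N a e) (hB : ClB N b f) : e ≠ f := by
  rintro rfl; exact clAB hr hl ha hb hab hiab e ⟨hA, hB⟩

theorem circ2 {e f : ↥N.E} {X : Set ↥N.E} (hef : e ≠ f) (hpar : ¬ N.Indep {e.1, f.1})
    (himg : Subtype.val '' X = {e.1, f.1}) : N.Circuit' (Subtype.val '' X) :=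
  (circuit'_iff hr hl).mpr (Or.inl ⟨e.1, f.1, vnei hef, e.2, f.2, hpar, himg⟩)

theorem circ3 {e f g : ↥N.E} {X : Set ↥N.E} (hef : e ≠ f) (heg : e ≠ g) (hfg : f ≠ g)
    (ief : N.Indep {e.1, f.1}) (ieg : N.Indep {e.1, g.1}) (ifg : N.Indep {f.1, g.1})
    (himg : Subtype.val '' X = {e.1, f.1, g.1}) : N.Circuit' (Subtype.val '' X) :=
  (circuit'_iff hr hl).mpr (Or.inr ⟨e.1, f.1, g.1, vnei hef, vnei heg, vnei hfg,
    e.2, f.2, g.2, ief, ieg, ifg, himg⟩)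

omit hr hl ha hb hab hiab in
theorem theta_loop_false {C₁ C₂ C₃ : Set ↥N.E}
    (hAB' : ∀ e : ↥N.E, ¬ (ClA N a e ∧ ClB N b e))
    (h2 : (twoGraph (ClA N a) (ClB N b)).IsCycle C₂)
    (h3 : (twoGraph (ClA N a) (ClB N b)).IsCycle C₃)
    (hΔ : C₃ = symmDiff C₁ C₂) {e : ↥N.E}
    (hty : ClA N a e ∨ ClB N b e) (hC1 : C₁ = {e}) : False := by
  by_cases heC2 : e ∈ C₂
  · rcases (isCycle_iff hAB').mp h2 with ⟨p, hty2, hC2⟩ | ⟨p, q, hpq, hp, hq, hC2⟩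
    · rw [hC2, Set.mem_singleton_iff] at heC2
      have hemp : C₃ = ∅ := by
        rw [hΔ, hC1, hC2, ← heC2, symmDiff_self]
        rfl
      exact Set.not_nonempty_empty (hemp ▸ h3.2.1)
    · rw [hC2] at heC2
      rcases mem_pair_iff.mp heC2 with rfl | rfl
      · rcases hty with h | h
        · exact hp.1 h
        · exact hp.2 h
      · rcases hty with h | h
        · exact hq.1 h
        · exact hq.2 h
  · have heC3 : e ∈ C₃ := by
      rw [hΔ]
      exact Set.mem_symmDiff.mpr (Or.inl ⟨hC1 ▸ rfl, heC2⟩)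
    rcases (isCycle_iff hAB').mp h3 with ⟨w, -, hC3⟩ | ⟨p, q, hpq, hp, hq, hC3⟩
    · rw [hC3, Set.mem_singleton_iff] at heC3
      obtain ⟨q', hq'⟩ := h2.2.1
      have hq'e : q' ≠ e := fun h => heC2 (h ▸ hq')
      have hmem : q' ∈ C₃ := by
        rw [hΔ]
        refine Set.mem_symmDiff.mpr (Or.inr ⟨hq', ?_⟩)
        rw [hC1]
        simpa using hq'e
      rw [hC3, Set.mem_singleton_iff] at hmem
      exact hq'e (hmem.trans heC3.symm)
    · rw [hC3] at heC3
      rcases mem_pair_iff.mp heC3 with rfl | rfl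
      · rcases hty with h | h
        · exact hp.1 h
        · exact hp.2 h
      · rcases hty with h | h
        · exact hq.1 h
        · exact hq.2 h

end FrameAux
namespace FrameAux

open Set MultiGraph BiasedGraph

variable {α : Type u} {N : Matroid α} {a b : α}
variable (hr : N.eRk' N.E = 2) (hl : ∀ e ∈ N.E, N.Indep {e})
  (ha : a ∈ N.E) (hb : b ∈ N.E) (hab : a ≠ b) (hiab : N.Indep {a, b})
include hr hl ha hb hab hiab

theorem theta_prop : (theBG N a b).ThetaProperty := by
  have hAB' := clAB hr hl ha hb hab hiab
  constructor
  · rintro C ⟨e, f, hef, he, hf, hpar, rfl⟩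
    exact isCycle_digon hAB' hef he hf
  · intro C₁ C₂ C₃ h1 h2 h3 hΔ hb1 hb2
    obtain ⟨e, f, hef, hle, hlf, hp1, rfl⟩ := hb1
    obtain ⟨g, h, hgh, hlg, hlh, hp2, rfl⟩ := hb2
    rcases (isCycle_iff hAB').mp h3 with ⟨p, hty, rfl⟩ | ⟨p, q, hpq, hp, hq, rfl⟩
    · exfalso
      have hpΔ : p ∈ symmDiff ({e, f} : Set ↥N.E) {g, h} := by
        rw [← hΔ]; exact rfl
      rcases Set.mem_symmDiff.mp hpΔ with ⟨hm, -⟩ | ⟨hm, -⟩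
      · rcases hty with h' | h'
        · exact (link_of_mem hm hle hlf).1 h'
        · exact (link_of_mem hm hle hlf).2 h'
      · rcases hty with h' | h'
        · exact (link_of_mem hm hlg hlh).1 h'
        · exact (link_of_mem hm hlg hlh).2 h'
    · obtain ⟨x, w, y, hC1, hC2, hC3, hxw, hwy, hxy⟩ :=
        sd_structure hΔ ⟨e, f, hef, rfl⟩ ⟨g, h, hgh, rfl⟩ ⟨p, q, hpq, rfl⟩
      have hmx : x ∈ ({e, f} : Set ↥N.E) := by rw [hC1]; exact Or.inl rfl
      have hmw : w ∈ ({e, f} : Set ↥N.E) := by rw [hC1]; exact Or.inr rfl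
      have hmy : y ∈ ({g, h} : Set ↥N.E) := by rw [hC2]; exact Or.inr rfl
      have hlx := link_of_mem hmx hle hlf
      have hly := link_of_mem hmy hlg hlh
      have hpxw : ¬ N.Indep {x.1, w.1} := par_transfer hC1 hef hp1
      have hpwy : ¬ N.Indep {w.1, y.1} := par_transfer hC2 hgh hp2
      have hpxy : ¬ N.Indep {x.1, y.1} :=
        par_trans hr hl w.2 (vnei hxy) hpxw hpwy
      rw [hC3]
      exact bal_of hxy hlx hly hpxy

theorem circ_to_frame (X : Set ↥N.E) (hC : N.Circuit' (Subtype.val '' X)) :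
    (theBG N a b).FrameCircuit X := by
  rcases (circuit'_iff hr hl).mp hC with
    ⟨x, y, hxy, hx, hy, hdep, hXeq⟩ | ⟨x, y, z, hxy, hxz, hyz, hx, hy, hz, i1, i2, i3, hXeq⟩
  · have hX : X = {⟨x, hx⟩, ⟨y, hy⟩} := image_pair_inv hx hy hXeq
    set ex : ↥N.E := ⟨x, hx⟩ with hex
    set ey : ↥N.E := ⟨y, hy⟩ with hey
    have hexey : ex ≠ ey := fun h => hxy (congrArg Subtype.val h)
    have hdep' : ¬ N.Indep {ex.1, ey.1} := hdep
    rcases tri (a := a) (b := b) ex with hA | hB | hL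
    · exact frame_two_A hr hl ha hb hab hiab hexey hA
        (clA_of_par hr hl ha hb hab hiab hA hdep') hX
    · exact frame_two_B hr hl ha hb hab hiab hexey hB
        (clB_of_par hr hl ha hb hab hiab hB hdep') hX
    · have hdep'' : ¬ N.Indep {ey.1, ex.1} := by rwa [Set.pair_comm] at hdep'
      have hLy : ¬ ClA N a ey ∧ ¬ ClB N b ey := by
        constructor
        · intro hA'
          exact hL.1 (clA_of_par hr hl ha hb hab hiab hA' hdep'')
        · intro hB'
          exact hL.2 (clB_of_par hr hl ha hb hab hiab hB' hdep'')
      exact frame_two_L hr hl ha hb hab hiab hexey hL hLy hdep' hX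
  · have hX : X = {⟨x, hx⟩, ⟨y, hy⟩, ⟨z, hz⟩} := image_triple_inv hx hy hz hXeq
    set ex : ↥N.E := ⟨x, hx⟩ with hex
    set ey : ↥N.E := ⟨y, hy⟩ with hey
    set ez : ↥N.E := ⟨z, hz⟩ with hez
    have hxy' : ex ≠ ey := fun h => hxy (congrArg Subtype.val h)
    have hxz' : ex ≠ ez := fun h => hxz (congrArg Subtype.val h)
    have hyz' : ey ≠ ez := fun h => hyz (congrArg Subtype.val h)
    have i1' : N.Indep {ex.1, ey.1} := i1
    have i2' : N.Indep {ex.1, ez.1} := i2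
    have i3' : N.Indep {ey.1, ez.1} := i3
    have hXc : ∀ (p q r : ↥N.E), X = {p, q, r} →
        ({p, q, r} : Set ↥N.E) = {ex, ey, ez} := by
      intro p q r h; rw [← h, hX]
    clear hXeq hC
    have perm1 : X = {ey, ex, ez} := by
      rw [hX]; ext t; simp only [Set.mem_insert_iff, Set.mem_singleton_iff]; tauto
    have perm2 : X = {ez, ex, ey} := by
      rw [hX]; ext t; simp only [Set.mem_insert_iff, Set.mem_singleton_iff]; tauto
    have perm3 : X = {ey, ez, ex} := by
      rw [hX]; ext t; simp only [Set.mem_insert_iff, Set.mem_singleton_iff]; tauto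
    have perm4 : X = {ez, ey, ex} := by
      rw [hX]; ext t; simp only [Set.mem_insert_iff, Set.mem_singleton_iff]; tauto
    have perm5 : X = {ex, ez, ey} := by
      rw [hX]; ext t; simp only [Set.mem_insert_iff, Set.mem_singleton_iff]; tauto
    rcases tri (a := a) (b := b) ex with hAx | hBx | hLx <;>
      rcases tri (a := a) (b := b) ey with hAy | hBy | hLy <;>
      rcases tri (a := a) (b := b) ez with hAz | hBz | hLz
    · exact absurd i1' (par_of_clA_clA hr hl ha hb hab hiab hAx hAy hxy').elim
    · exact absurd i1' (par_of_clA_clA hr hl ha hb hab hiab hAx hAy hxy').elim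
    · exact absurd i1' (par_of_clA_clA hr hl ha hb hab hiab hAx hAy hxy').elim
    · exact absurd i2' (par_of_clA_clA hr hl ha hb hab hiab hAx hAz hxz').elim
    · -- A B B
      exact absurd i3' (par_of_clB_clB hr hl ha hb hab hiab hBy hBz hyz').elim
    · -- A B L
      exact frame_ABL hr hl ha hb hab hiab hxy' hxz' hyz' hAx hBy hLz hX
    · -- A L A
      exact absurd i2' (par_of_clA_clA hr hl ha hb hab hiab hAx hAz hxz').elim
    · -- A L B
      exact frame_ABL hr hl ha hb hab hiab hxz' hxy' (Ne.symm hyz') hAx hBz hLy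
        perm5
    · -- A L L
      exact frame_ALL hr hl ha hb hab hiab hxy' hxz' hyz' hAx hLy hLz i3' hX
    · -- B A A
      exact absurd i3' (par_of_clA_clA hr hl ha hb hab hiab hAy hAz hyz').elim
    · -- B A B
      exact absurd i2' (par_of_clB_clB hr hl ha hb hab hiab hBx hBz hxz').elim
    · -- B A L
      exact frame_ABL hr hl ha hb hab hiab (Ne.symm hxy') hyz' hxz' hAy hBx hLz
        perm1
    · -- B B A
      exact absurd i1' (par_of_clB_clB hr hl ha hb hab hiab hBx hBy hxy').elim
    · -- B B B
      exact absurd i1' (par_of_clB_clB hr hl ha hb hab hiab hBx hBy hxy').elim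
    · -- B B L
      exact absurd i1' (par_of_clB_clB hr hl ha hb hab hiab hBx hBy hxy').elim
    · -- B L A
      exact frame_ABL hr hl ha hb hab hiab (Ne.symm hxz') (Ne.symm hyz') hxy'
        hAz hBx hLy perm2
    · -- B L B
      exact absurd i2' (par_of_clB_clB hr hl ha hb hab hiab hBx hBz hxz').elim
    · -- B L L
      exact frame_BLL hr hl ha hb hab hiab hxy' hxz' hyz' hBx hLy hLz i3' hX
    · -- L A A
      exact absurd i3' (par_of_clA_clA hr hl ha hb hab hiab hAy hAz hyz').elim
    · -- L A B
      exact frame_ABL hr hl ha hb hab hiab hyz' (Ne.symm hxy') (Ne.symm hxz')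
        hAy hBz hLx perm3
    · -- L A L
      exact frame_ALL hr hl ha hb hab hiab (Ne.symm hxy') hyz' hxz' hAy hLx hLz i2'
        perm1
    · -- L B A
      exact frame_ABL hr hl ha hb hab hiab (Ne.symm hyz') (Ne.symm hxz') (Ne.symm hxy')
        hAz hBy hLx perm4
    · -- L B B
      exact absurd i3' (par_of_clB_clB hr hl ha hb hab hiab hBy hBz hyz').elim
    · -- L B L
      exact frame_BLL hr hl ha hb hab hiab (Ne.symm hxy') hyz' hxz' hBy hLx hLz i2'
        perm1
    · -- L L A
      exact frame_ALL hr hl ha hb hab hiab (Ne.symm hxz') (Ne.symm hyz') hxy' hAz hLx hLy i1'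
        perm2
    · -- L L B
      exact frame_BLL hr hl ha hb hab hiab (Ne.symm hxz') (Ne.symm hyz') hxy' hBz hLx hLy i1'
        perm2
    · -- L L L
      exact frame_LLL hr hl ha hb hab hiab hxy' hxz' hyz' hLx hLy hLz i1' i2' i3' hX

end FrameAux
namespace FrameAux

open Set MultiGraph BiasedGraph

variable {α : Type u} {N : Matroid α} {a b : α}
variable (hr : N.eRk' N.E = 2) (hl : ∀ e ∈ N.E, N.Indep {e})
  (ha : a ∈ N.E) (hb : b ∈ N.E) (hab : a ≠ b) (hiab : N.Indep {a, b})
include hr hl ha hb hab hiab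

theorem frame_to_circ (X : Set ↥N.E) (hF : (theBG N a b).FrameCircuit X) :
    N.Circuit' (Subtype.val '' X) := by
  have hAB' := clAB hr hl ha hb hab hiab
  rcases hF with ⟨-, hbal⟩ | ⟨C₁, C₂, C₃, hu1, hu2, hu3, hΔ, rfl⟩ |
    ⟨C₁, C₂, hu1, hu2, hdisj, ⟨v₀, hV⟩, rfl⟩ |
    ⟨C₁, C₂, P, hu1, hu2, hvd, hP, hPd, ⟨a', b', hab', hEnds, hV1, hV2⟩, rfl⟩
  · -- balanced cycle
    obtain ⟨e, f, hef, he, hf, hpar, rfl⟩ := hbal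
    exact circ2 hr hl ha hb hab hiab hef hpar (by simp [Set.image_insert_eq])
  · -- contrabalanced theta
    rcases (isCycle_iff hAB').mp hu1.1 with ⟨e, hty, hC1⟩ | ⟨e, f, hef, he, hf, hC1⟩
    · exact absurd (theta_loop_false hAB' hu2.1 hu3.1 hΔ hty hC1) not_false
    rcases (isCycle_iff hAB').mp hu2.1 with ⟨e', hty, hC2⟩ | ⟨g, h, hgh, hg, hh, hC2⟩
    · exact absurd (theta_loop_false hAB' hu1.1 hu3.1
        (by rw [hΔ, symmDiff_comm]) hty hC2) not_false
    rcases (isCycle_iff hAB').mp hu3.1 with ⟨w, hty, hC3⟩ | ⟨p, q, hpq, hp', hq', hC3⟩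
    · exfalso
      have hwΔ : w ∈ symmDiff C₁ C₂ := by
        rw [← hΔ, hC3]; exact rfl
      rcases Set.mem_symmDiff.mp hwΔ with ⟨hm, -⟩ | ⟨hm, -⟩
      · rw [hC1] at hm
        rcases hty with h' | h'
        · exact (link_of_mem hm he hf).1 h'
        · exact (link_of_mem hm he hf).2 h'
      · rw [hC2] at hm
        rcases hty with h' | h'
        · exact (link_of_mem hm hg hh).1 h'
        · exact (link_of_mem hm hg hh).2 h'
    · obtain ⟨x, w, y, hC1', hC2', hC3', hxw, hwy, hxy⟩ :=
        sd_structure hΔ ⟨e, f, hef, hC1⟩ ⟨g, h, hgh, hC2⟩ ⟨p, q, hpq, hC3⟩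
      have hmx : x ∈ ({e, f} : Set ↥N.E) := by rw [← hC1, hC1']; exact Or.inl rfl
      have hmw : w ∈ ({e, f} : Set ↥N.E) := by rw [← hC1, hC1']; exact Or.inr rfl
      have hmw2 : w ∈ ({g, h} : Set ↥N.E) := by rw [← hC2, hC2']; exact Or.inl rfl
      have hmy : y ∈ ({g, h} : Set ↥N.E) := by rw [← hC2, hC2']; exact Or.inr rfl
      have hlx := link_of_mem hmx he hf
      have hlw := link_of_mem hmw he hf
      have hly := link_of_mem hmy hg hh
      have hixw : N.Indep {x.1, w.1} :=
        indep_of_unbal hr hl ha hb hab hiab (hC1' ▸ hu1.2) hxw hlx hlw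
      have hiwy : N.Indep {w.1, y.1} :=
        indep_of_unbal hr hl ha hb hab hiab (hC2' ▸ hu2.2) hwy hlw hly
      have hixy : N.Indep {x.1, y.1} :=
        indep_of_unbal hr hl ha hb hab hiab (hC3' ▸ hu3.2) hxy hlx hly
      refine circ3 hr hl ha hb hab hiab hxw hxy hwy hixw hixy hiwy ?_
      rw [hC1', hC2']
      ext t
      simp only [Set.image_union, Set.image_insert_eq, Set.image_singleton,
        Set.mem_union, Set.mem_insert_iff, Set.mem_singleton_iff]
      tauto
  · -- tight handcuffs
    rcases (isCycle_iff hAB').mp hu1.1 with ⟨e, hty1, hC1⟩ | ⟨e, f, hef, he, hf, hC1⟩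
    · rcases (isCycle_iff hAB').mp hu2.1 with ⟨f, hty2, hC2⟩ | ⟨f, g, hfg, hf, hg, hC2⟩
      · -- loop, loop
        have hef : e ≠ f := by
          rw [hC1, hC2] at hdisj
          exact Set.disjoint_singleton.mp hdisj
        have himg : Subtype.val '' (C₁ ∪ C₂) = {e.1, f.1} := by
          rw [hC1, hC2]
          ext t
          simp only [Set.image_union, Set.image_singleton, Set.mem_union,
            Set.mem_insert_iff, Set.mem_singleton_iff]
          try tauto
        rcases hty1 with hA1 | hB1 <;> rcases hty2 with hA2 | hB2
        · exact circ2 hr hl ha hb hab hiab hef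
            (par_of_clA_clA hr hl ha hb hab hiab hA1 hA2 hef) himg
        · exfalso
          rw [hC1, hC2, theBG_mg, vset_loopA hAB' hA1, vset_loopB hAB' hB2] at hV
          have h1 : v₀ ∈ ({vu} : Set (ULift Bool)) ∩ {vv} := hV ▸ rfl
          exact vu_ne_vv (h1.1.symm.trans h1.2)
        · exfalso
          rw [hC1, hC2, theBG_mg, vset_loopB hAB' hB1, vset_loopA hAB' hA2] at hV
          have h1 : v₀ ∈ ({vv} : Set (ULift Bool)) ∩ {vu} := hV ▸ rfl
          exact vu_ne_vv (h1.2.symm.trans h1.1)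
        · exact circ2 hr hl ha hb hab hiab hef
            (par_of_clB_clB hr hl ha hb hab hiab hB1 hB2 hef) himg
      · -- loop, digon
        have hifg : N.Indep {f.1, g.1} :=
          indep_of_unbal hr hl ha hb hab hiab (hC2 ▸ hu2.2) hfg hf hg
        have hdm : e ∉ ({f, g} : Set ↥N.E) := by
          rw [hC1, hC2] at hdisj
          exact Set.disjoint_singleton_left.mp hdisj
        have hef : e ≠ f := fun h => hdm (h ▸ Or.inl rfl)
        have heg : e ≠ g := fun h => hdm (h ▸ Or.inr rfl)
        have himg : Subtype.val '' (C₁ ∪ C₂) = {e.1, f.1, g.1} := by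
          rw [hC1, hC2]
          ext t
          simp only [Set.image_union, Set.image_insert_eq, Set.image_singleton,
            Set.mem_union, Set.mem_insert_iff, Set.mem_singleton_iff]
          try tauto
        rcases hty1 with hA | hB
        · exact circ3 hr hl ha hb hab hiab hef heg hfg
            (indep_A_link hr hl ha hb hab hiab hA hf)
            (indep_A_link hr hl ha hb hab hiab hA hg) hifg himg
        · exact circ3 hr hl ha hb hab hiab hef heg hfg
            (indep_B_link hr hl ha hb hab hiab hB hf)
            (indep_B_link hr hl ha hb hab hiab hB hg) hifg himg
    · rcases (isCycle_iff hAB').mp hu2.1 with ⟨g, hty2, hC2⟩ | ⟨g, h, hgh, hg, hh, hC2⟩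
      · -- digon, loop
        have hief : N.Indep {e.1, f.1} :=
          indep_of_unbal hr hl ha hb hab hiab (hC1 ▸ hu1.2) hef he hf
        have hdm : g ∉ ({e, f} : Set ↥N.E) := by
          rw [hC1, hC2] at hdisj
          exact Set.disjoint_singleton_right.mp hdisj
        have hge : g ≠ e := fun h => hdm (h ▸ Or.inl rfl)
        have hgf : g ≠ f := fun h => hdm (h ▸ Or.inr rfl)
        have himg : Subtype.val '' (C₁ ∪ C₂) = {g.1, e.1, f.1} := by
          rw [hC1, hC2]
          ext t
          simp only [Set.image_union, Set.image_insert_eq, Set.image_singleton,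
            Set.mem_union, Set.mem_insert_iff, Set.mem_singleton_iff]
          try tauto
        rcases hty2 with hA | hB
        · exact circ3 hr hl ha hb hab hiab hge hgf hef
            (indep_A_link hr hl ha hb hab hiab hA he)
            (indep_A_link hr hl ha hb hab hiab hA hf) hief himg
        · exact circ3 hr hl ha hb hab hiab hge hgf hef
            (indep_B_link hr hl ha hb hab hiab hB he)
            (indep_B_link hr hl ha hb hab hiab hB hf) hief himg
      · -- digon, digon: impossible
        exfalso
        rw [hC1, hC2, theBG_mg,
          vset_links hAB' ⟨e, Or.inl rfl⟩ (by rintro p (rfl | rfl); exacts [he, hf]),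
          vset_links hAB' ⟨g, Or.inl rfl⟩ (by rintro p (rfl | rfl); exacts [hg, hh]),
          Set.inter_self] at hV
        have h1 : vu ∈ ({v₀} : Set (ULift Bool)) := hV ▸ (Or.inl rfl)
        have h2 : vv ∈ ({v₀} : Set (ULift Bool)) := hV ▸ (Or.inr rfl)
        exact vu_ne_vv (h1.trans h2.symm)
  · -- loose handcuffs
    -- rule out digons using vertex-disjointness
    have hVne : ∀ C : Set ↥N.E, (twoGraph (ClA N a) (ClB N b)).IsCycle C →
        ((twoGraph (ClA N a) (ClB N b)).VSet C).Nonempty ∧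
        ∀ w, w ∈ (twoGraph (ClA N a) (ClB N b)).VSet C → w ∈ ({vu, vv} : Set (ULift Bool)) := by
      intro C hC
      constructor
      · rcases (isCycle_iff hAB').mp hC with ⟨e, hty, rfl⟩ | ⟨e, f, hef, he, hf, rfl⟩
        · rcases hty with hA | hB
          · rw [vset_loopA hAB' hA]; exact ⟨vu, rfl⟩
          · rw [vset_loopB hAB' hB]; exact ⟨vv, rfl⟩
        · rw [vset_links hAB' ⟨e, Or.inl rfl⟩ (by rintro p (rfl | rfl); exacts [he, hf])]
          exact ⟨vu, Or.inl rfl⟩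
      · intro w hw
        rcases vert_cases w with rfl | rfl
        · exact Or.inl rfl
        · exact Or.inr rfl
    rcases (isCycle_iff hAB').mp hu1.1 with ⟨e, hty1, hC1⟩ | ⟨e, f, hef, he, hf, hC1⟩
    swap
    · -- C₁ digon: contradiction with vertex disjointness
      exfalso
      obtain ⟨w, hw⟩ := (hVne C₂ hu2.1).1
      have hw2 := (hVne C₂ hu2.1).2 w hw
      have hw1 : w ∈ (twoGraph (ClA N a) (ClB N b)).VSet C₁ := by
        rw [hC1, vset_links hAB' ⟨e, Or.inl rfl⟩
          (by rintro p (rfl | rfl); exacts [he, hf])]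
        exact hw2
      exact Set.disjoint_left.mp hvd hw1 hw
    rcases (isCycle_iff hAB').mp hu2.1 with ⟨f, hty2, hC2⟩ | ⟨f, g, hfg, hf, hg, hC2⟩
    swap
    · exfalso
      have h1 : vu ∈ (twoGraph (ClA N a) (ClB N b)).VSet C₂ := by
        rw [hC2, vset_links hAB' ⟨f, Or.inl rfl⟩
          (by rintro p (rfl | rfl); exacts [hf, hg])]
        exact Or.inl rfl
      have hvv2 : vv ∈ (twoGraph (ClA N a) (ClB N b)).VSet C₂ := by
        rw [hC2, vset_links hAB' ⟨f, Or.inl rfl⟩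
          (by rintro p (rfl | rfl); exacts [hf, hg])]
        exact Or.inr rfl
      obtain ⟨w, hw⟩ := (hVne C₁ hu1.1).1
      have hw2 := (hVne C₁ hu1.1).2 w hw
      rcases hw2 with rfl | rfl
      · exact Set.disjoint_left.mp hvd hw h1
      · exact Set.disjoint_left.mp hvd hw hvv2
    -- both loops; types must differ
    rcases hty1 with hA1 | hB1 <;> rcases hty2 with hA2 | hB2
    · exfalso
      have h1 : vu ∈ (twoGraph (ClA N a) (ClB N b)).VSet C₁ := by
        rw [hC1, vset_loopA hAB' hA1]; exact rfl
      have h2 : vu ∈ (twoGraph (ClA N a) (ClB N b)).VSet C₂ := by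
        rw [hC2, vset_loopA hAB' hA2]; exact rfl
      exact Set.disjoint_left.mp hvd h1 h2
    · -- C₁ A-loop, C₂ B-loop: the main case
      rw [hC1] at hV1 hPd ⊢
      rw [hC2] at hV2 hPd ⊢
      rw [theBG_mg, vset_loopA hAB' hA1] at hV1
      rw [theBG_mg, vset_loopB hAB' hB2] at hV2
      have ha' : a' = vu ∧ a' ∈ (twoGraph (ClA N a) (ClB N b)).VSet P := by
        have : a' ∈ (twoGraph (ClA N a) (ClB N b)).VSet P ∩ {vu} := hV1 ▸ rfl
        exact ⟨this.2, this.2 ▸ this.1⟩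
      have hb' : b' = vv ∧ b' ∈ (twoGraph (ClA N a) (ClB N b)).VSet P := by
        have : b' ∈ (twoGraph (ClA N a) (ClB N b)).VSet P ∩ {vv} := hV2 ▸ rfl
        exact ⟨this.2, this.2 ▸ this.1⟩
      rw [theBG_mg] at hEnds
      rw [ha'.1, hb'.1] at hEnds
      have hdu : (twoGraph (ClA N a) (ClB N b)).deg P vu = 1 := by
        have : vu ∈ (twoGraph (ClA N a) (ClB N b)).Ends P := by
          rw [hEnds]; exact Or.inl rfl
        exact this.2
      have hdv : (twoGraph (ClA N a) (ClB N b)).deg P vv = 1 := by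
        have : vv ∈ (twoGraph (ClA N a) (ClB N b)).Ends P := by
          rw [hEnds]; exact Or.inr rfl
        exact this.2
      obtain ⟨g, hg, rfl⟩ := path_eq_singleton hAB' hP hdu hdv
      have hgm : g ∉ ({e} : Set ↥N.E) ∪ {f} := Set.disjoint_singleton_left.mp hPd
      have hge : e ≠ g := fun h => hgm (Or.inl (h ▸ rfl))
      have hgf : f ≠ g := fun h => hgm (Or.inr (h ▸ rfl))
      refine circ3 hr hl ha hb hab hiab (ne_of_A_B hr hl ha hb hab hiab hA1 hB2) hge hgf
        (indep_A_B hr hl ha hb hab hiab hA1 hB2)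
        (indep_A_link hr hl ha hb hab hiab hA1 hg)
        (indep_B_link hr hl ha hb hab hiab hB2 hg) ?_
      ext t
      simp only [Set.image_union, Set.image_singleton, Set.mem_union,
        Set.mem_insert_iff, Set.mem_singleton_iff]
      try tauto
    · -- C₁ B-loop, C₂ A-loop
      rw [hC1] at hV1 hPd ⊢
      rw [hC2] at hV2 hPd ⊢
      rw [theBG_mg, vset_loopB hAB' hB1] at hV1
      rw [theBG_mg, vset_loopA hAB' hA2] at hV2
      have ha' : a' = vv ∧ a' ∈ (twoGraph (ClA N a) (ClB N b)).VSet P := by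
        have : a' ∈ (twoGraph (ClA N a) (ClB N b)).VSet P ∩ {vv} := hV1 ▸ rfl
        exact ⟨this.2, this.2 ▸ this.1⟩
      have hb' : b' = vu ∧ b' ∈ (twoGraph (ClA N a) (ClB N b)).VSet P := by
        have : b' ∈ (twoGraph (ClA N a) (ClB N b)).VSet P ∩ {vu} := hV2 ▸ rfl
        exact ⟨this.2, this.2 ▸ this.1⟩
      rw [theBG_mg] at hEnds
      rw [ha'.1, hb'.1] at hEnds
      have hdu : (twoGraph (ClA N a) (ClB N b)).deg P vu = 1 := by
        have : vu ∈ (twoGraph (ClA N a) (ClB N b)).Ends P := by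
          rw [hEnds]; exact Or.inr rfl
        exact this.2
      have hdv : (twoGraph (ClA N a) (ClB N b)).deg P vv = 1 := by
        have : vv ∈ (twoGraph (ClA N a) (ClB N b)).Ends P := by
          rw [hEnds]; exact Or.inl rfl
        exact this.2
      obtain ⟨g, hg, rfl⟩ := path_eq_singleton hAB' hP hdu hdv
      have hgm : g ∉ ({e} : Set ↥N.E) ∪ {f} := Set.disjoint_singleton_left.mp hPd
      have hge : e ≠ g := fun h => hgm (Or.inl (h ▸ rfl))
      have hgf : f ≠ g := fun h => hgm (Or.inr (h ▸ rfl))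
      refine circ3 hr hl ha hb hab hiab (ne_of_A_B hr hl ha hb hab hiab hA2 hB1).symm hge hgf
        (by rw [Set.pair_comm]; exact indep_A_B hr hl ha hb hab hiab hA2 hB1)
        (indep_B_link hr hl ha hb hab hiab hB1 hg)
        (indep_A_link hr hl ha hb hab hiab hA2 hg) ?_
      ext t
      simp only [Set.image_union, Set.image_singleton, Set.mem_union,
        Set.mem_insert_iff, Set.mem_singleton_iff]
      try tauto
    · exfalso
      have h1 : vv ∈ (twoGraph (ClA N a) (ClB N b)).VSet C₁ := by
        rw [hC1, vset_loopB hAB' hB1]; exact rfl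
      have h2 : vv ∈ (twoGraph (ClA N a) (ClB N b)).VSet C₂ := by
        rw [hC2, vset_loopB hAB' hB2]; exact rfl
      exact Set.disjoint_left.mp hvd h1 h2

end FrameAux
namespace FrameAux

open Set MultiGraph BiasedGraph

variable {α : Type u} {N : Matroid α} {a b : α}
variable (hr : N.eRk' N.E = 2) (hl : ∀ e ∈ N.E, N.Indep {e})
  (ha : a ∈ N.E) (hb : b ∈ N.E) (hab : a ≠ b) (hiab : N.Indep {a, b})
include hr hl ha hb hab hiab

theorem represents : BiasedGraph.Represents N (theBG N a b) :=
  ⟨theta_prop hr hl ha hb hab hiab, fun X =>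
    ⟨circ_to_frame hr hl ha hb hab hiab X, frame_to_circ hr hl ha hb hab hiab X⟩⟩

theorem loops (e : ↥N.E) (he : e.1 = a ∨ e.1 = b) :
    (theBG N a b).toMultiGraph.IsLoopEdge e ∧
      ({e} : Set ↥N.E) ∉ (theBG N a b).Balanced := by
  refine ⟨?_, not_bal_singleton e⟩
  show (twoGraph (ClA N a) (ClB N b)).fst e = (twoGraph (ClA N a) (ClB N b)).snd e
  rcases he with h | h
  · have hA : ClA N a e := Or.inl h
    have hnB : ¬ ClB N b e := fun hB => clAB hr hl ha hb hab hiab e ⟨hA, hB⟩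
    rw [(fst_eq_vu_iff e).mpr hnB, (snd_eq_vu_iff e).mpr hA]
  · have hB : ClB N b e := Or.inl h
    have hnA : ¬ ClA N a e := fun hA => clAB hr hl ha hb hab hiab e ⟨hA, hB⟩
    rw [(fst_eq_vv_iff e).mpr hB, (snd_eq_vv_iff e).mpr hnA]

end FrameAux

theorem stmt_13 {α : Type*} (N : Matroid α) (hr : N.eRk' N.E = 2)
    (hloopless : ∀ e ∈ N.E, N.Indep {e}) (L : Set α) (hL : L.encard = 2)
    (hLi : N.Indep L) :
    N.IsFrameMatroidal L := by
  obtain ⟨a, b, hab, rfl⟩ := Set.encard_eq_two.mp hL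
  have ha : a ∈ N.E := hLi.subset_ground (Or.inl rfl)
  have hb : b ∈ N.E := hLi.subset_ground (Or.inr rfl)
  exact ⟨ULift Bool, FrameAux.theBG N a b,
    FrameAux.represents hr hloopless ha hb hab hLi,
    fun e he => FrameAux.loops hr hloopless ha hb hab hLi e he⟩
end

section
/- There is no biased graph representation of the three-element circuit U_{2,3} in which all three elements are unbalanced loops; consequently the matroidal (U_{2,3}, E(U_{2,3})) is not frame. -/
open Set

/-! ### Biased graph core -/

universe u v

/-! ### Auxiliary lemmas -/

lemma cycle_singleton_of_all_loops {V : Type*} {E : Type*} (G : MultiGraph V E)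
    (hall : ∀ e, G.fst e = G.snd e) {C : Set E} (hC : G.IsCycle C) :
    ∃ e, C = {e} := by
  obtain ⟨hfin, ⟨e, he⟩, hconn, hdeg⟩ := hC
  have hv : ∀ f ∈ C, G.fst f = G.fst e := by
    intro f hf
    have h := hconn he hf
    induction h with
    | refl => rfl
    | tail _ hadj ih =>
      next b c _ =>
        obtain ⟨hb, hcC, v, hv1, hv2⟩ := hadj
        have h1 : G.fst b = v := by rcases hv1 with h | h; exact h; rw [hall b]; exact h
        have h2 : G.fst c = v := by rcases hv2 with h | h; exact h; rw [hall c]; exact h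
        rw [h2, ← h1]; exact ih hb
  have hvmem : G.fst e ∈ G.VSet C := ⟨e, he, Or.inl rfl⟩
  have hd := hdeg _ hvmem
  have hs1 : {f | f ∈ C ∧ G.fst f = G.fst e} = C := by
    ext f; exact ⟨fun h => h.1, fun h => ⟨h, hv f h⟩⟩
  have hs2 : {f | f ∈ C ∧ G.snd f = G.fst e} = C := by
    ext f; constructor
    · exact fun h => h.1
    · intro h; exact ⟨h, by rw [← hall f]; exact hv f h⟩
  rw [MultiGraph.deg, hs1, hs2] at hd
  have : C.ncard = 1 := by omega
  exact Set.ncard_eq_one.mp this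

lemma no_path_of_all_loops {V : Type*} {E : Type*} (G : MultiGraph V E)
    (hall : ∀ e, G.fst e = G.snd e) {P : Set E} : ¬ G.IsPath P := by
  rintro ⟨hfin, hne, hconn, hdeg, hends⟩
  have hne' : (G.Ends P).Nonempty := by
    rw [Set.nonempty_iff_ne_empty]
    intro h
    rw [h, Set.ncard_empty] at hends
    omega
  obtain ⟨v, hvmem, hdv⟩ := hne'
  have hs : {e | e ∈ P ∧ G.fst e = v} = {e | e ∈ P ∧ G.snd e = v} := by
    ext f; simp only [Set.mem_setOf_eq, hall f]
  rw [MultiGraph.deg, hs] at hdv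
  omega

theorem stmt_14 (M : Matroid (Fin 3)) (hE : M.E = Set.univ)
    (hC : M.Circuit' Set.univ) :
    ¬ M.IsFrameMatroidal Set.univ := by
  rintro ⟨V, Ω, ⟨hθ, hcirc⟩, hloops⟩
  have hall : ∀ e : ↥M.E, Ω.toMultiGraph.fst e = Ω.toMultiGraph.snd e := by
    intro e
    exact (hloops e (by trivial)).1
  have himg : (Subtype.val '' (Set.univ : Set ↥M.E)) = (Set.univ : Set (Fin 3)) := by
    rw [Set.image_univ, Subtype.range_coe, hE]
  have hFC : Ω.FrameCircuit Set.univ := (hcirc Set.univ).1 (by rwa [himg])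
  have h0 : (0 : Fin 3) ∈ M.E := by rw [hE]; trivial
  have h1 : (1 : Fin 3) ∈ M.E := by rw [hE]; trivial
  have h2 : (2 : Fin 3) ∈ M.E := by rw [hE]; trivial
  set a : ↥M.E := ⟨0, h0⟩ with ha_def
  set b : ↥M.E := ⟨1, h1⟩ with hb_def
  set c : ↥M.E := ⟨2, h2⟩ with hc_def
  have hab : a ≠ b := by simp [ha_def, hb_def, Subtype.ext_iff]
  have hac : a ≠ c := by simp [ha_def, hc_def, Subtype.ext_iff]
  have hbc : b ≠ c := by simp [hb_def, hc_def, Subtype.ext_iff]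
  rcases hFC with ⟨hcyc, _⟩ | ⟨C₁, C₂, C₃, hu1, hu2, hu3, _, hU⟩ |
      ⟨C₁, C₂, hu1, hu2, _, _, hU⟩ | ⟨C₁, C₂, P, _, _, _, hP, _, _, _⟩
  · obtain ⟨x, hx⟩ := cycle_singleton_of_all_loops _ hall hcyc
    have hax : a = x := by have : a ∈ (Set.univ : Set ↥M.E) := trivial; rw [hx] at this; exact this
    have hbx : b = x := by have : b ∈ (Set.univ : Set ↥M.E) := trivial; rw [hx] at this; exact this
    exact hab (hax.trans hbx.symm)
  · obtain ⟨x, hx⟩ := cycle_singleton_of_all_loops _ hall hu1.1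
    obtain ⟨y, hy⟩ := cycle_singleton_of_all_loops _ hall hu2.1
    have hmem : ∀ z : ↥M.E, z = x ∨ z = y := by
      intro z
      have : z ∈ C₁ ∪ C₂ := by rw [← hU]; trivial
      rw [hx, hy] at this
      tauto
    rcases hmem a with h | h <;> rcases hmem b with h' | h' <;> rcases hmem c with h'' | h'' <;>
      first
        | exact hab (h.trans h'.symm)
        | exact hac (h.trans h''.symm)
        | exact hbc (h'.trans h''.symm)
  · obtain ⟨x, hx⟩ := cycle_singleton_of_all_loops _ hall hu1.1
    obtain ⟨y, hy⟩ := cycle_singleton_of_all_loops _ hall hu2.1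
    have hmem : ∀ z : ↥M.E, z = x ∨ z = y := by
      intro z
      have : z ∈ C₁ ∪ C₂ := by rw [← hU]; trivial
      rw [hx, hy] at this
      tauto
    rcases hmem a with h | h <;> rcases hmem b with h' | h' <;> rcases hmem c with h'' | h'' <;>
      first
        | exact hab (h.trans h'.symm)
        | exact hac (h.trans h''.symm)
        | exact hbc (h'.trans h''.symm)
  · exact no_path_of_all_loops _ hall hP
end

section
/- The cycle matroid M(W₄) of the 4-spoke wheel, with L the set consisting of two nonadjacent rim edges e₁, e₂ (each having both endpoints of degree 3), is not a frame matroidal: there is no biased graph Ω with F(Ω) ≅ M(W₄) in which both e₁ and e₂ are unbalanced loops. -/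
open Set

/-! ### Biased graph core -/

universe u v

/-- The 4-spoke wheel as a multigraph: vertex `4` is the hub, edges `0,1,2,3` are the
rim edges (edge `i` joins `i` and `i+1 mod 4`), edges `4,...,7` are the spokes. -/
def W4 : MultiGraph (Fin 5) (Fin 8) where
  fst := ![0, 1, 2, 3, 0, 1, 2, 3]
  snd := ![1, 2, 3, 0, 4, 4, 4, 4]

/-- `W₄` with all cycles balanced; its frame matroid is the cycle matroid `M(W₄)`. -/
def W4Biased : BiasedGraph (Fin 5) (Fin 8) := ⟨W4, {C | W4.IsCycle C}⟩
/-! ### Auxiliary lemmas -/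

namespace MultiGraph

variable {V : Type u} {E : Type v} (G : MultiGraph V E)

/-- `e` joins `a` and `b`. -/
def Jn (e : E) (a b : V) : Prop :=
  (G.fst e = a ∧ G.snd e = b) ∨ (G.fst e = b ∧ G.snd e = a)

open Classical in
/-- the number of endpoints of `e` equal to `v` (a loop counts twice). -/
noncomputable def cnt (e : E) (v : V) : ℕ :=
  (if G.fst e = v then 1 else 0) + (if G.snd e = v then 1 else 0)

variable {G}

lemma jn_comm {e : E} {a b : V} (h : G.Jn e a b) : G.Jn e b a := h.symm

lemma jn_inc_left {e : E} {a b : V} (h : G.Jn e a b) : G.Inc a e := by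
  rcases h with ⟨h1, h2⟩ | ⟨h1, h2⟩
  exacts [Or.inl h1, Or.inr h2]

lemma jn_inc_right {e : E} {a b : V} (h : G.Jn e a b) : G.Inc b e :=
  jn_inc_left (jn_comm h)

lemma jn_of_incs {e : E} {a b : V} (h1 : G.Inc a e) (h2 : G.Inc b e) (hab : a ≠ b) :
    G.Jn e a b := by
  rcases h1 with h1 | h1 <;> rcases h2 with h2 | h2
  · exact absurd (h1.symm.trans h2) hab
  · exact Or.inl ⟨h1, h2⟩
  · exact Or.inr ⟨h2, h1⟩
  · exact absurd (h1.symm.trans h2) hab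

lemma exists_jn_of_inc {e : E} {v : V} (hl : G.fst e ≠ G.snd e) (h : G.Inc v e) :
    ∃ y, y ≠ v ∧ G.Jn e v y := by
  rcases h with h | h
  · exact ⟨G.snd e, fun hy => hl (h.trans hy.symm), Or.inl ⟨h, rfl⟩⟩
  · exact ⟨G.fst e, fun hy => hl (hy.trans h.symm), Or.inr ⟨rfl, h⟩⟩

open Classical in
private lemma ite_comm' (x y : V) : (if x = y then (1:ℕ) else 0) = (if y = x then 1 else 0) := by
  split_ifs with p q
  · rfl
  · exact absurd p.symm q
  · exact absurd ‹y = x›.symm p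
  · rfl

open Classical in
lemma cnt_of_jn {e : E} {a b : V} (h : G.Jn e a b) (hab : a ≠ b) (v : V) :
    G.cnt e v = (if v = a then 1 else 0) + (if v = b then 1 else 0) := by
  unfold cnt
  rcases h with ⟨h1, h2⟩ | ⟨h1, h2⟩ <;> subst h1 <;> subst h2
  · rw [ite_comm' (G.fst e) v, ite_comm' (G.snd e) v]
  · rw [ite_comm' (G.fst e) v, ite_comm' (G.snd e) v, add_comm]

open Classical in
lemma cnt_eq_zero_iff {e : E} {v : V} : G.cnt e v = 0 ↔ ¬ G.Inc v e := by
  unfold cnt Inc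
  split_ifs <;> simp_all

lemma cnt_pos_of_inc {e : E} {v : V} (h : G.Inc v e) : 1 ≤ G.cnt e v := by
  by_contra hc
  exact (cnt_eq_zero_iff.mp (by omega)) h

open Classical in
lemma ncard_filter_insert (p : E → Prop) {e : E} {S : Set E} (he : e ∉ S) (hS : S.Finite) :
    {x | x ∈ insert e S ∧ p x}.ncard = (if p e then 1 else 0) + {x | x ∈ S ∧ p x}.ncard := by
  by_cases hpe : p e
  · rw [if_pos hpe]
    have hset : {x | x ∈ insert e S ∧ p x} = insert e {x | x ∈ S ∧ p x} := by
      ext x; simp only [Set.mem_insert_iff, Set.mem_setOf_eq]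
      constructor
      · rintro ⟨h1 | h1, h2⟩
        exacts [Or.inl h1, Or.inr ⟨h1, h2⟩]
      · rintro (rfl | ⟨h1, h2⟩)
        exacts [⟨Or.inl rfl, hpe⟩, ⟨Or.inr h1, h2⟩]
    rw [hset, Set.ncard_insert_of_notMem (fun hx => he hx.1)
      (hS.subset (fun x hx => hx.1)), add_comm]
  · rw [if_neg hpe, zero_add]
    congr 1
    ext x; simp only [Set.mem_insert_iff, Set.mem_setOf_eq]
    constructor
    · rintro ⟨rfl | h1, h2⟩
      exacts [absurd h2 hpe, ⟨h1, h2⟩]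
    · rintro ⟨h1, h2⟩; exact ⟨Or.inr h1, h2⟩

lemma ncard_filter_empty (p : E → Prop) : {x | x ∈ (∅ : Set E) ∧ p x}.ncard = 0 := by
  convert Set.ncard_empty E using 2
  ext x; simp

lemma deg_empty (v : V) : G.deg (∅ : Set E) v = 0 := by
  unfold deg
  rw [ncard_filter_empty, ncard_filter_empty]

lemma deg_insert {e : E} {S : Set E} (he : e ∉ S) (hS : S.Finite) (v : V) :
    G.deg (insert e S) v = G.cnt e v + G.deg S v := by
  unfold deg cnt
  rw [ncard_filter_insert _ he hS, ncard_filter_insert _ he hS]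
  omega

lemma deg_single (e : E) (v : V) : G.deg ({e} : Set E) v = G.cnt e v := by
  rw [show ({e} : Set E) = insert e ∅ by simp, deg_insert (by simp) (Set.finite_empty),
    deg_empty, add_zero]

lemma deg_pair {e f : E} (hef : e ≠ f) (v : V) :
    G.deg ({e, f} : Set E) v = G.cnt e v + G.cnt f v := by
  rw [show ({e, f} : Set E) = insert e {f} from rfl,
    deg_insert (by simpa using hef) (Set.finite_singleton f), deg_single]

lemma deg_triple {e f g : E} (hef : e ≠ f) (heg : e ≠ g) (hfg : f ≠ g) (v : V) :
    G.deg ({e, f, g} : Set E) v = G.cnt e v + G.cnt f v + G.cnt g v := by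
  rw [show ({e, f, g} : Set E) = insert e {f, g} from rfl,
    deg_insert (by simp [hef, heg]) (Set.toFinite _), deg_pair hfg]
  omega

lemma deg_quad {e f g h : E} (hef : e ≠ f) (heg : e ≠ g) (heh : e ≠ h) (hfg : f ≠ g)
    (hfh : f ≠ h) (hgh : g ≠ h) (v : V) :
    G.deg ({e, f, g, h} : Set E) v = G.cnt e v + G.cnt f v + G.cnt g v + G.cnt h v := by
  rw [show ({e, f, g, h} : Set E) = insert e {f, g, h} from rfl,
    deg_insert (by simp [hef, heg, heh]) (Set.toFinite _), deg_triple hfg hfh hgh]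
  omega

lemma mem_VSet {X : Set E} {v : V} : v ∈ G.VSet X ↔ ∃ e ∈ X, G.Inc v e := Iff.rfl

lemma deg_pos_of_mem {X : Set E} (hfin : X.Finite) {e : E} {v : V} (he : e ∈ X)
    (hinc : G.Inc v e) : 1 ≤ G.deg X v := by
  unfold deg
  rcases hinc with h | h
  · have : 0 < {x | x ∈ X ∧ G.fst x = v}.ncard :=
      (Set.ncard_pos (hfin.subset fun x hx => hx.1)).mpr ⟨e, he, h⟩
    omega
  · have : 0 < {x | x ∈ X ∧ G.snd x = v}.ncard :=
      (Set.ncard_pos (hfin.subset fun x hx => hx.1)).mpr ⟨e, he, h⟩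
    omega

end MultiGraph
namespace MultiGraph

variable {V : Type u} {E : Type v} {G : MultiGraph V E}

lemma edgeAdj_symm {X : Set E} : Symmetric (G.EdgeAdj X) := by
  rintro e f ⟨he, hf, v, h1, h2⟩
  exact ⟨hf, he, v, h2, h1⟩

lemma eq_singleton_of_loop {X : Set E} {e : E} (hfin : X.Finite) (hconn : G.ConnectedOn X)
    (hdeg : ∀ v ∈ G.VSet X, G.deg X v ≤ 2) (heX : e ∈ X) (hl : G.fst e = G.snd e) :
    X = {e} := by
  set u := G.fst e with hu
  have huV : u ∈ G.VSet X := ⟨e, heX, Or.inl rfl⟩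
  have key : ∀ f ∈ X, G.Inc u f → f = e := by
    intro f hf hinc
    by_contra hne
    have hd := hdeg u huV
    unfold deg at hd
    have hfin1 : {x | x ∈ X ∧ G.fst x = u}.Finite := hfin.subset fun x hx => hx.1
    have hfin2 : {x | x ∈ X ∧ G.snd x = u}.Finite := hfin.subset fun x hx => hx.1
    have he1 : e ∈ {x | x ∈ X ∧ G.fst x = u} := ⟨heX, rfl⟩
    have he2 : e ∈ {x | x ∈ X ∧ G.snd x = u} := ⟨heX, hl.symm⟩
    have h1 : 1 ≤ {x | x ∈ X ∧ G.fst x = u}.ncard :=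
      (Set.ncard_pos hfin1).mpr ⟨e, he1⟩
    have h2 : 1 ≤ {x | x ∈ X ∧ G.snd x = u}.ncard :=
      (Set.ncard_pos hfin2).mpr ⟨e, he2⟩
    rcases hinc with h | h
    · have hsub : {e, f} ⊆ {x | x ∈ X ∧ G.fst x = u} := by
        rintro x (rfl | rfl)
        exacts [he1, ⟨hf, h⟩]
      have := Set.ncard_le_ncard hsub hfin1
      rw [Set.ncard_pair (Ne.symm hne)] at this
      omega
    · have hsub : {e, f} ⊆ {x | x ∈ X ∧ G.snd x = u} := by
        rintro x (rfl | rfl)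
        exacts [he2, ⟨hf, h⟩]
      have := Set.ncard_le_ncard hsub hfin2
      rw [Set.ncard_pair (Ne.symm hne)] at this
      omega
  have key2 : ∀ f, Relation.ReflTransGen (G.EdgeAdj X) e f → f = e := by
    intro f h
    induction h with
    | refl => rfl
    | tail h₁ h₂ ih =>
      obtain ⟨hb, hf, v, hv1, hv2⟩ := h₂
      subst ih
      have hvu : v = u := by
        rcases hv1 with h | h
        · exact h.symm
        · exact (hl ▸ h).symm
      exact key _ hf (hvu ▸ hv2)
  apply Set.eq_singleton_iff_unique_mem.mpr
  exact ⟨heX, fun f hf => key2 f (hconn heX hf)⟩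

lemma cycle_eq_singleton_of_loop {C : Set E} {e : E} (hC : G.IsCycle C) (heC : e ∈ C)
    (hl : G.fst e = G.snd e) : C = {e} :=
  eq_singleton_of_loop hC.1 hC.2.2.1 (fun v hv => (hC.2.2.2 v hv).le) heC hl

lemma vset_singleton_of_loop {e : E} {u : V} (h1 : G.fst e = u) (h2 : G.snd e = u) :
    G.VSet {e} = {u} := by
  ext v
  simp only [VSet, Inc, Set.mem_setOf_eq, Set.mem_singleton_iff]
  constructor
  · rintro ⟨f, rfl, h | h⟩
    · exact (h1 ▸ h).symm
    · exact (h2 ▸ h).symm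
  · rintro rfl
    exact ⟨e, rfl, Or.inl h1⟩

open Classical in
lemma isCycle_singleton_of_loop {e : E} {u : V} (h1 : G.fst e = u) (h2 : G.snd e = u) :
    G.IsCycle {e} := by
  refine ⟨Set.finite_singleton e, ⟨e, rfl⟩, ?_, ?_⟩
  · rintro f g rfl rfl
    exact Relation.ReflTransGen.refl
  · intro v hv
    rw [vset_singleton_of_loop h1 h2, Set.mem_singleton_iff] at hv
    subst hv
    rw [deg_single]
    unfold cnt
    rw [if_pos h1, if_pos h2]

lemma path_no_loop {P : Set E} (hP : G.IsPath P) {e : E} (he : e ∈ P) :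
    G.fst e ≠ G.snd e := by
  intro hl
  obtain ⟨hfin, hne, hconn, hdeg, hends⟩ := hP
  have hPe : P = {e} := eq_singleton_of_loop hfin hconn hdeg he hl
  subst hPe
  have hEnds : G.Ends {e} = ∅ := by
    ext v
    simp only [Ends, Set.mem_setOf_eq, Set.mem_empty_iff_false, iff_false, not_and]
    intro hv
    rw [vset_singleton_of_loop rfl hl.symm, Set.mem_singleton_iff] at hv
    subst hv
    rw [deg_single]
    unfold cnt
    rw [if_pos rfl, if_pos hl.symm]
    omega
  rw [hEnds, Set.ncard_empty] at hends
  omega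

end MultiGraph
namespace MultiGraph

variable {V : Type u} {E : Type v} {G : MultiGraph V E}

lemma inc_iff_of_jn {e : E} {a b v : V} (h : G.Jn e a b) :
    G.Inc v e ↔ v = a ∨ v = b := by
  unfold Inc
  rcases h with ⟨h1, h2⟩ | ⟨h1, h2⟩
  · rw [h1, h2]; exact or_congr eq_comm eq_comm
  · rw [h1, h2]; exact (or_congr eq_comm eq_comm).trans or_comm

lemma deg_end_left {P : Set E} {u w : V} (hEnds : G.Ends P = {u, w}) : G.deg P u = 1 :=
  (show u ∈ G.Ends P by rw [hEnds]; simp).2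

lemma deg_end_right {P : Set E} {u w : V} (hEnds : G.Ends P = {u, w}) : G.deg P w = 1 :=
  (show w ∈ G.Ends P by rw [hEnds]; simp).2

lemma deg_eq_two_of_mid {P : Set E} {u w : V} (hP : G.IsPath P) (hEnds : G.Ends P = {u, w})
    {v : V} (hv : v ∈ G.VSet P) (hvu : v ≠ u) (hvw : v ≠ w) : G.deg P v = 2 := by
  obtain ⟨x, hx, hinc⟩ := hv
  have h1 : 1 ≤ G.deg P v := deg_pos_of_mem hP.1 hx hinc
  have h2 : G.deg P v ≤ 2 := hP.2.2.2.1 v ⟨x, hx, hinc⟩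
  have h3 : G.deg P v ≠ 1 := by
    intro hd
    have : v ∈ G.Ends P := ⟨⟨x, hx, hinc⟩, hd⟩
    rw [hEnds] at this
    rcases this with h | h
    exacts [hvu h, hvw h]
  omega

open Classical in
lemma cnt_one_of_jn_left {e : E} {a b : V} (h : G.Jn e a b) (hab : a ≠ b) :
    G.cnt e a = 1 := by
  rw [cnt_of_jn h hab, if_pos rfl, if_neg hab]

open Classical in
lemma cnt_one_of_jn_right {e : E} {a b : V} (h : G.Jn e a b) (hab : a ≠ b) :
    G.cnt e b = 1 := by
  rw [cnt_of_jn h hab, if_pos rfl, if_neg (Ne.symm hab)]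

open Classical in
lemma cnt_zero_of_jn {e : E} {a b v : V} (h : G.Jn e a b) (hab : a ≠ b)
    (hva : v ≠ a) (hvb : v ≠ b) : G.cnt e v = 0 := by
  rw [cnt_of_jn h hab, if_neg hva, if_neg hvb]

lemma inc_of_cnt_pos {e : E} {v : V} (h : G.cnt e v ≠ 0) : G.Inc v e := by
  by_contra hc
  exact h (cnt_eq_zero_iff.mpr hc)

/-- Building a two-edge path with explicit endpoints. -/
lemma path2_build {e f : E} {a m b : V} (hef : e ≠ f) (ham : a ≠ m) (hmb : m ≠ b)
    (hab : a ≠ b) (h1 : G.Jn e a m) (h2 : G.Jn f m b) :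
    G.IsPath {e, f} ∧ G.Ends {e, f} = {a, b} := by
  classical
  have hdeg : ∀ v, G.deg ({e, f} : Set E) v =
      ((if v = a then 1 else 0) + (if v = m then 1 else 0)) +
      ((if v = m then 1 else 0) + (if v = b then 1 else 0)) := fun v => by
    rw [deg_pair hef, cnt_of_jn h1 ham, cnt_of_jn h2 hmb]
  have hV : ∀ v, v ∈ G.VSet {e, f} ↔ v = a ∨ v = m ∨ v = b := by
    intro v
    constructor
    · rintro ⟨x, hx, hinc⟩
      simp only [Set.mem_insert_iff, Set.mem_singleton_iff] at hx
      rcases hx with rfl | rfl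
      · rcases (inc_iff_of_jn h1).mp hinc with h | h
        exacts [Or.inl h, Or.inr (Or.inl h)]
      · rcases (inc_iff_of_jn h2).mp hinc with h | h
        exacts [Or.inr (Or.inl h), Or.inr (Or.inr h)]
    · rintro (rfl | rfl | rfl)
      · exact ⟨e, by simp, jn_inc_left h1⟩
      · exact ⟨e, by simp, jn_inc_right h1⟩
      · exact ⟨f, by simp, jn_inc_right h2⟩
  have hEnds : G.Ends {e, f} = {a, b} := by
    ext v
    simp only [Ends, Set.mem_setOf_eq, hV v, hdeg v, Set.mem_insert_iff,
      Set.mem_singleton_iff]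
    by_cases hva : v = a <;> by_cases hvm : v = m <;> by_cases hvb : v = b <;>
      simp_all
  refine ⟨⟨Set.toFinite _, ⟨e, by simp⟩, ?_, ?_, ?_⟩, hEnds⟩
  · have hadj : G.EdgeAdj {e, f} e f := ⟨by simp, by simp, m, jn_inc_right h1, jn_inc_left h2⟩
    intro p q hp hq
    simp only [Set.mem_insert_iff, Set.mem_singleton_iff] at hp hq
    rcases hp with rfl | rfl <;> rcases hq with rfl | rfl
    · exact Relation.ReflTransGen.refl
    · exact Relation.ReflTransGen.single hadj
    · exact Relation.ReflTransGen.single (edgeAdj_symm hadj)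
    · exact Relation.ReflTransGen.refl
  · intro v hv
    rw [hdeg v]
    split_ifs <;> first | omega | simp_all
  · rw [hEnds]
    exact Set.ncard_pair hab

/-- Building a four-edge path with explicit endpoints. -/
lemma path4_build {e f g h : E} {a m₁ m₂ m₃ b : V}
    (hef : e ≠ f) (heg : e ≠ g) (heh : e ≠ h) (hfg : f ≠ g) (hfh : f ≠ h) (hgh : g ≠ h)
    (d1 : a ≠ m₁) (d2 : a ≠ m₂) (d3 : a ≠ m₃) (d4 : a ≠ b) (d5 : m₁ ≠ m₂) (d6 : m₁ ≠ m₃)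
    (d7 : m₁ ≠ b) (d8 : m₂ ≠ m₃) (d9 : m₂ ≠ b) (d10 : m₃ ≠ b)
    (h1 : G.Jn e a m₁) (h2 : G.Jn f m₁ m₂) (h3 : G.Jn g m₂ m₃) (h4 : G.Jn h m₃ b) :
    G.IsPath {e, f, g, h} ∧ G.Ends {e, f, g, h} = {a, b} := by
  classical
  have hdeg : ∀ v, G.deg ({e, f, g, h} : Set E) v =
      ((if v = a then 1 else 0) + (if v = m₁ then 1 else 0)) +
      ((if v = m₁ then 1 else 0) + (if v = m₂ then 1 else 0)) +
      ((if v = m₂ then 1 else 0) + (if v = m₃ then 1 else 0)) +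
      ((if v = m₃ then 1 else 0) + (if v = b then 1 else 0)) := fun v => by
    rw [deg_quad hef heg heh hfg hfh hgh, cnt_of_jn h1 d1, cnt_of_jn h2 d5,
      cnt_of_jn h3 d8, cnt_of_jn h4 d10]
  have hV : ∀ v, v ∈ G.VSet {e, f, g, h} ↔
      v = a ∨ v = m₁ ∨ v = m₂ ∨ v = m₃ ∨ v = b := by
    intro v
    constructor
    · rintro ⟨x, hx, hinc⟩
      simp only [Set.mem_insert_iff, Set.mem_singleton_iff] at hx
      rcases hx with rfl | rfl | rfl | rfl
      · rcases (inc_iff_of_jn h1).mp hinc with h | h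
        exacts [Or.inl h, Or.inr (Or.inl h)]
      · rcases (inc_iff_of_jn h2).mp hinc with h | h
        exacts [Or.inr (Or.inl h), Or.inr (Or.inr (Or.inl h))]
      · rcases (inc_iff_of_jn h3).mp hinc with h | h
        exacts [Or.inr (Or.inr (Or.inl h)), Or.inr (Or.inr (Or.inr (Or.inl h)))]
      · rcases (inc_iff_of_jn h4).mp hinc with h | h
        exacts [Or.inr (Or.inr (Or.inr (Or.inl h))), Or.inr (Or.inr (Or.inr (Or.inr h)))]
    · rintro (rfl | rfl | rfl | rfl | rfl)
      · exact ⟨e, by simp, jn_inc_left h1⟩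
      · exact ⟨f, by simp, jn_inc_left h2⟩
      · exact ⟨g, by simp, jn_inc_left h3⟩
      · exact ⟨h, by simp, jn_inc_left h4⟩
      · exact ⟨h, by simp, jn_inc_right h4⟩
  have hEnds : G.Ends {e, f, g, h} = {a, b} := by
    ext v
    simp only [Ends, Set.mem_setOf_eq, hV v, hdeg v, Set.mem_insert_iff,
      Set.mem_singleton_iff]
    by_cases hva : v = a <;> by_cases hv1 : v = m₁ <;> by_cases hv2 : v = m₂ <;>
      by_cases hv3 : v = m₃ <;> by_cases hvb : v = b <;> simp_all
  refine ⟨⟨Set.toFinite _, ⟨e, by simp⟩, ?_, ?_, ?_⟩, hEnds⟩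
  · have a1 : G.EdgeAdj {e, f, g, h} e f :=
      ⟨by simp, by simp, m₁, jn_inc_right h1, jn_inc_left h2⟩
    have a2 : G.EdgeAdj {e, f, g, h} f g :=
      ⟨by simp, by simp, m₂, jn_inc_right h2, jn_inc_left h3⟩
    have a3 : G.EdgeAdj {e, f, g, h} g h :=
      ⟨by simp, by simp, m₃, jn_inc_right h3, jn_inc_left h4⟩
    have anchor : ∀ p ∈ ({e, f, g, h} : Set E),
        Relation.ReflTransGen (G.EdgeAdj {e, f, g, h}) e p := by
      intro p hp
      simp only [Set.mem_insert_iff, Set.mem_singleton_iff] at hp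
      rcases hp with rfl | rfl | rfl | rfl
      · exact Relation.ReflTransGen.refl
      · exact Relation.ReflTransGen.single a1
      · exact (Relation.ReflTransGen.single a1).tail a2
      · exact ((Relation.ReflTransGen.single a1).tail a2).tail a3
    intro p q hp hq
    exact ((@Relation.ReflTransGen.symmetric _ _
      ⟨fun _ _ hd => edgeAdj_symm hd⟩).symm _ _ (anchor p hp)).trans (anchor q hq)
  · intro v hv
    rw [hdeg v]
    split_ifs <;> first | omega | simp_all
  · rw [hEnds]
    exact Set.ncard_pair d4

end MultiGraph
namespace MultiGraph

variable {V : Type u} {E : Type v} {G : MultiGraph V E}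

lemma path2_aux {e f : E} {u w : V} (hef : e ≠ f) (hP : G.IsPath {e, f})
    (hEnds : G.Ends {e, f} = {u, w}) (huw : u ≠ w) (hinc : G.Inc u e) :
    ∃ x, x ≠ u ∧ x ≠ w ∧ G.Jn e u x ∧ G.Jn f x w := by
  classical
  have hloopE : G.fst e ≠ G.snd e := path_no_loop hP (by simp)
  have hloopF : G.fst f ≠ G.snd f := path_no_loop hP (by simp)
  have hdu : G.cnt e u + G.cnt f u = 1 := by
    rw [← deg_pair hef]; exact deg_end_left hEnds
  have hdw : G.cnt e w + G.cnt f w = 1 := by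
    rw [← deg_pair hef]; exact deg_end_right hEnds
  obtain ⟨x, hxu, hJe⟩ := exists_jn_of_inc hloopE hinc
  have hux : u ≠ x := Ne.symm hxu
  have hcEu : G.cnt e u = 1 := cnt_one_of_jn_left hJe hux
  have hnfu : ¬ G.Inc u f := cnt_eq_zero_iff.mp (by omega)
  by_cases hxw : x = w
  · exfalso
    have hcEw : G.cnt e w = 1 := by
      rw [cnt_of_jn hJe hux, if_neg (Ne.symm huw), if_pos hxw.symm]
    have hnfw : ¬ G.Inc w f := cnt_eq_zero_iff.mp (by omega)
    set p := G.fst f with hp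
    have hpf : G.Inc p f := Or.inl rfl
    have hpu : p ≠ u := fun h => hnfu (h ▸ hpf)
    have hpw : p ≠ w := fun h => hnfw (h ▸ hpf)
    have hpx : p ≠ x := fun h => hpw (h.trans hxw)
    have hpV : p ∈ G.VSet {e, f} := ⟨f, by simp, hpf⟩
    have hdp : G.deg ({e, f} : Set E) p = 2 := deg_eq_two_of_mid hP hEnds hpV hpu hpw
    rw [deg_pair hef, cnt_zero_of_jn hJe hux hpu hpx] at hdp
    have hcFp : G.cnt f p = 1 := by
      unfold cnt
      rw [if_pos rfl, if_neg (fun h => hloopF h.symm)]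
    omega
  · have hxV : x ∈ G.VSet {e, f} := ⟨e, by simp, jn_inc_right hJe⟩
    have hdx : G.deg ({e, f} : Set E) x = 2 := deg_eq_two_of_mid hP hEnds hxV hxu hxw
    rw [deg_pair hef, cnt_one_of_jn_right hJe hux] at hdx
    have hIncxf : G.Inc x f := inc_of_cnt_pos (by omega)
    have hcEw : G.cnt e w = 0 := cnt_zero_of_jn hJe hux (Ne.symm huw) (Ne.symm hxw)
    have hIncwf : G.Inc w f := inc_of_cnt_pos (by omega)
    exact ⟨x, hxu, hxw, hJe, jn_of_incs hIncxf hIncwf hxw⟩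

lemma path2_struct {e f : E} {u w : V} (hef : e ≠ f) (hP : G.IsPath {e, f})
    (hEnds : G.Ends {e, f} = {u, w}) (huw : u ≠ w) :
    ∃ x, x ≠ u ∧ x ≠ w ∧
      ((G.Jn e u x ∧ G.Jn f x w) ∨ (G.Jn e w x ∧ G.Jn f x u)) := by
  have huV : u ∈ G.VSet {e, f} := by
    have : u ∈ G.Ends {e, f} := by rw [hEnds]; simp
    exact this.1
  obtain ⟨x0, hx0, hinc0⟩ := huV
  simp only [Set.mem_insert_iff, Set.mem_singleton_iff] at hx0
  rcases hx0 with rfl | rfl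
  · obtain ⟨x, hxu, hxw, hJ1, hJ2⟩ := path2_aux hef hP hEnds huw hinc0
    exact ⟨x, hxu, hxw, Or.inl ⟨hJ1, hJ2⟩⟩
  · have hcomm : ({e, x0} : Set E) = {x0, e} := Set.pair_comm e x0
    have hP' : G.IsPath {x0, e} := hcomm ▸ hP
    have hEnds' : G.Ends {x0, e} = {u, w} := by rw [← hcomm]; exact hEnds
    obtain ⟨x, hxu, hxw, hJ1, hJ2⟩ :=
      path2_aux (Ne.symm hef) hP' hEnds' huw hinc0
    exact ⟨x, hxu, hxw, Or.inr ⟨jn_comm hJ2, jn_comm hJ1⟩⟩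

lemma path3_aux {e f g : E} {u w x : V} (hef : e ≠ f) (heg : e ≠ g) (hfg : f ≠ g)
    (hP : G.IsPath {e, f, g}) (hEnds : G.Ends {e, f, g} = {u, w}) (huw : u ≠ w)
    (hxu : x ≠ u) (hxw : x ≠ w) (hJe : G.Jn e u x) (hIncxf : G.Inc x f) :
    ∃ y, y ≠ u ∧ y ≠ w ∧ y ≠ x ∧ G.Jn f x y ∧ G.Jn g y w := by
  classical
  have hloopF : G.fst f ≠ G.snd f := path_no_loop hP (by simp)
  have hloopG : G.fst g ≠ G.snd g := path_no_loop hP (by simp)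
  have hux : u ≠ x := Ne.symm hxu
  have hdu : G.cnt e u + G.cnt f u + G.cnt g u = 1 := by
    rw [← deg_triple hef heg hfg]; exact deg_end_left hEnds
  have hdw : G.cnt e w + G.cnt f w + G.cnt g w = 1 := by
    rw [← deg_triple hef heg hfg]; exact deg_end_right hEnds
  have hcEu : G.cnt e u = 1 := cnt_one_of_jn_left hJe hux
  have hnfu : ¬ G.Inc u f := cnt_eq_zero_iff.mp (by omega)
  have hngu : ¬ G.Inc u g := cnt_eq_zero_iff.mp (by omega)
  have hcEw : G.cnt e w = 0 := cnt_zero_of_jn hJe hux (Ne.symm huw) (Ne.symm hxw)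
  have hxV : x ∈ G.VSet {e, f, g} := ⟨e, by simp, jn_inc_right hJe⟩
  have hdx : G.deg ({e, f, g} : Set E) x = 2 := deg_eq_two_of_mid hP hEnds hxV hxu hxw
  obtain ⟨y, hyx, hJf⟩ := exists_jn_of_inc hloopF hIncxf
  have hxy : x ≠ y := Ne.symm hyx
  have hyu : y ≠ u := fun h => hnfu (h ▸ jn_inc_right hJf)
  by_cases hyw : y = w
  · exfalso
    have hcFw : G.cnt f w = 1 := by
      rw [cnt_of_jn hJf hxy, if_neg (Ne.symm hxw), if_pos hyw.symm]
    have hngw : ¬ G.Inc w g := cnt_eq_zero_iff.mp (by omega)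
    have hcFx : G.cnt f x = 1 := cnt_one_of_jn_left hJf hxy
    have hcEx : G.cnt e x = 1 := cnt_one_of_jn_right hJe hux
    rw [deg_triple hef heg hfg, hcEx, hcFx] at hdx
    have hngx : ¬ G.Inc x g := cnt_eq_zero_iff.mp (by omega)
    set p := G.fst g with hp
    have hpg : G.Inc p g := Or.inl rfl
    have hpu : p ≠ u := fun h => hngu (h ▸ hpg)
    have hpw : p ≠ w := fun h => hngw (h ▸ hpg)
    have hpx : p ≠ x := fun h => hngx (h ▸ hpg)
    have hpy : p ≠ y := fun h => hpw (h.trans hyw)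
    have hpV : p ∈ G.VSet {e, f, g} := ⟨g, by simp, hpg⟩
    have hcGp : G.cnt g p = 1 := by
      unfold cnt
      rw [if_pos rfl, if_neg (fun h => hloopG h.symm)]
    have hdp : G.deg ({e, f, g} : Set E) p = 1 := by
      rw [deg_triple hef heg hfg, cnt_zero_of_jn hJe hux hpu hpx,
        cnt_zero_of_jn hJf hxy hpx hpy, hcGp]
    have : p ∈ G.Ends {e, f, g} := ⟨hpV, hdp⟩
    rw [hEnds] at this
    rcases this with h | h
    exacts [hpu h, hpw h]
  · have hyV : y ∈ G.VSet {e, f, g} := ⟨f, by simp, jn_inc_right hJf⟩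
    have hdy : G.deg ({e, f, g} : Set E) y = 2 := deg_eq_two_of_mid hP hEnds hyV hyu hyw
    rw [deg_triple hef heg hfg, cnt_zero_of_jn hJe hux hyu hyx,
      cnt_one_of_jn_right hJf hxy] at hdy
    have hIncyg : G.Inc y g := inc_of_cnt_pos (by omega)
    have hcFw : G.cnt f w = 0 := cnt_zero_of_jn hJf hxy (Ne.symm hxw) (Ne.symm hyw)
    have hIncwg : G.Inc w g := inc_of_cnt_pos (by omega)
    exact ⟨y, hyu, hyw, hyx, hJf, jn_of_incs hIncyg hIncwg hyw⟩

lemma path3_struct {e f g : E} {u w x : V} (hef : e ≠ f) (heg : e ≠ g) (hfg : f ≠ g)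
    (hP : G.IsPath {e, f, g}) (hEnds : G.Ends {e, f, g} = {u, w}) (huw : u ≠ w)
    (hxu : x ≠ u) (hxw : x ≠ w) (hJe : G.Jn e u x) :
    ∃ y, y ≠ u ∧ y ≠ w ∧ y ≠ x ∧
      ((G.Jn f x y ∧ G.Jn g y w) ∨ (G.Jn g x y ∧ G.Jn f y w)) := by
  classical
  have hxV : x ∈ G.VSet {e, f, g} := ⟨e, by simp, jn_inc_right hJe⟩
  have hdx : G.deg ({e, f, g} : Set E) x = 2 := deg_eq_two_of_mid hP hEnds hxV hxu hxw
  have hux : u ≠ x := Ne.symm hxu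
  have hcEx : G.cnt e x = 1 := cnt_one_of_jn_right hJe hux
  rw [deg_triple hef heg hfg, hcEx] at hdx
  by_cases hIncxf : G.Inc x f
  · obtain ⟨y, h1, h2, h3, h4, h5⟩ := path3_aux hef heg hfg hP hEnds huw hxu hxw hJe hIncxf
    exact ⟨y, h1, h2, h3, Or.inl ⟨h4, h5⟩⟩
  · have hcFx : G.cnt f x = 0 := cnt_eq_zero_iff.mpr hIncxf
    have hIncxg : G.Inc x g := inc_of_cnt_pos (by omega)
    have hcomm : ({e, f, g} : Set E) = {e, g, f} := by ext z; simp; tauto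
    have hP' : G.IsPath {e, g, f} := hcomm ▸ hP
    have hEnds' : G.Ends {e, g, f} = {u, w} := by rw [← hcomm]; exact hEnds
    obtain ⟨y, h1, h2, h3, h4, h5⟩ :=
      path3_aux heg hef (Ne.symm hfg) hP' hEnds' huw hxu hxw hJe hIncxg
    exact ⟨y, h1, h2, h3, Or.inr ⟨h4, h5⟩⟩

end MultiGraph
/-! ### Computations in `W4` -/

instance (v : Fin 5) (e : Fin 8) : Decidable (W4.Inc v e) := by
  unfold MultiGraph.Inc; infer_instance

/-- Degree computed with finsets. -/
def finDeg (S : Finset (Fin 8)) (v : Fin 5) : ℕ :=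
  (S.filter (W4.fst · = v)).card + (S.filter (W4.snd · = v)).card

lemma deg_coe (S : Finset (Fin 8)) (v : Fin 5) : W4.deg ↑S v = finDeg S v := by
  unfold MultiGraph.deg finDeg
  rw [← Set.ncard_coe_finset (S.filter (W4.fst · = v)),
    ← Set.ncard_coe_finset (S.filter (W4.snd · = v))]
  congr 1 <;> · congr 1; ext e; simp

lemma w4_cycle_degs {S : Finset (Fin 8)} (h : W4.IsCycle ↑S) :
    ∀ v, (∃ e ∈ S, W4.Inc v e) → finDeg S v = 2 := by
  intro v ⟨e, he, hi⟩
  rw [← deg_coe]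
  exact h.2.2.2 v ⟨e, Finset.mem_coe.mpr he, hi⟩

lemma w4_vset_coe {S : Finset (Fin 8)} {v : Fin 5} (hv : v ∈ W4.VSet ↑S) :
    ∃ e ∈ S, W4.Inc v e := by
  obtain ⟨e, he, hi⟩ := hv
  exact ⟨e, Finset.mem_coe.mp he, hi⟩

lemma w4_isCycle (S : Finset (Fin 8)) (e₀ : Fin 8) (he₀ : e₀ ∈ S)
    (hconn : W4.ConnectedOn ↑S)
    (hdeg : ∀ v, (∃ e ∈ S, W4.Inc v e) → finDeg S v = 2) : W4.IsCycle ↑S :=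
  ⟨Set.toFinite _, ⟨e₀, Finset.mem_coe.mpr he₀⟩, hconn,
    fun v hv => (deg_coe S v) ▸ hdeg v (w4_vset_coe hv)⟩

lemma w4_adj {S : Set (Fin 8)} {e f : Fin 8} (he : e ∈ S) (hf : f ∈ S) (v : Fin 5)
    (h1 : W4.Inc v e) (h2 : W4.Inc v f) : W4.EdgeAdj S e f := ⟨he, hf, v, h1, h2⟩

lemma w4_conn_of_anchor {S : Set (Fin 8)} {e₀ : Fin 8}
    (h : ∀ e ∈ S, Relation.ReflTransGen (W4.EdgeAdj S) e₀ e) : W4.ConnectedOn S := by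
  intro e f he hf
  exact ((@Relation.ReflTransGen.symmetric _ _
    ⟨fun _ _ hd => MultiGraph.edgeAdj_symm hd⟩).symm _ _ (h e he)).trans (h f hf)

lemma w4_rim : W4.IsCycle ↑({0, 1, 2, 3} : Finset (Fin 8)) := by
  apply w4_isCycle _ 0 (by decide)
  · apply w4_conn_of_anchor (e₀ := 0)
    intro e he
    simp only [Finset.coe_insert, Finset.coe_singleton, Set.mem_insert_iff,
      Set.mem_singleton_iff] at he
    have m0 : (0 : Fin 8) ∈ (↑({0, 1, 2, 3} : Finset (Fin 8)) : Set (Fin 8)) := by simp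
    have m1 : (1 : Fin 8) ∈ (↑({0, 1, 2, 3} : Finset (Fin 8)) : Set (Fin 8)) := by simp
    have m2 : (2 : Fin 8) ∈ (↑({0, 1, 2, 3} : Finset (Fin 8)) : Set (Fin 8)) := by simp
    have m3 : (3 : Fin 8) ∈ (↑({0, 1, 2, 3} : Finset (Fin 8)) : Set (Fin 8)) := by simp
    have a01 := w4_adj m0 m1 1 (by decide) (by decide)
    have a12 := w4_adj m1 m2 2 (by decide) (by decide)
    have a23 := w4_adj m2 m3 3 (by decide) (by decide)
    rcases he with rfl | rfl | rfl | rfl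
    · exact Relation.ReflTransGen.refl
    · exact Relation.ReflTransGen.single a01
    · exact (Relation.ReflTransGen.single a01).tail a12
    · exact ((Relation.ReflTransGen.single a01).tail a12).tail a23
  · decide

lemma w4_c5a : W4.IsCycle ↑({0, 1, 2, 7, 4} : Finset (Fin 8)) := by
  apply w4_isCycle _ 0 (by decide)
  · apply w4_conn_of_anchor (e₀ := 0)
    intro e he
    simp only [Finset.coe_insert, Finset.coe_singleton, Set.mem_insert_iff,
      Set.mem_singleton_iff] at he
    have m0 : (0 : Fin 8) ∈ (↑({0, 1, 2, 7, 4} : Finset (Fin 8)) : Set (Fin 8)) := by simp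
    have m1 : (1 : Fin 8) ∈ (↑({0, 1, 2, 7, 4} : Finset (Fin 8)) : Set (Fin 8)) := by simp
    have m2 : (2 : Fin 8) ∈ (↑({0, 1, 2, 7, 4} : Finset (Fin 8)) : Set (Fin 8)) := by simp
    have m7 : (7 : Fin 8) ∈ (↑({0, 1, 2, 7, 4} : Finset (Fin 8)) : Set (Fin 8)) := by simp
    have m4 : (4 : Fin 8) ∈ (↑({0, 1, 2, 7, 4} : Finset (Fin 8)) : Set (Fin 8)) := by simp
    have a01 := w4_adj m0 m1 1 (by decide) (by decide)
    have a12 := w4_adj m1 m2 2 (by decide) (by decide)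
    have a27 := w4_adj m2 m7 3 (by decide) (by decide)
    have a74 := w4_adj m7 m4 4 (by decide) (by decide)
    rcases he with rfl | rfl | rfl | rfl | rfl
    · exact Relation.ReflTransGen.refl
    · exact Relation.ReflTransGen.single a01
    · exact (Relation.ReflTransGen.single a01).tail a12
    · exact ((Relation.ReflTransGen.single a01).tail a12).tail a27
    · exact (((Relation.ReflTransGen.single a01).tail a12).tail a27).tail a74
  · decide

lemma w4_c5b : W4.IsCycle ↑({0, 2, 3, 5, 6} : Finset (Fin 8)) := by
  apply w4_isCycle _ 0 (by decide)
  · apply w4_conn_of_anchor (e₀ := 0)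
    intro e he
    simp only [Finset.coe_insert, Finset.coe_singleton, Set.mem_insert_iff,
      Set.mem_singleton_iff] at he
    have m0 : (0 : Fin 8) ∈ (↑({0, 2, 3, 5, 6} : Finset (Fin 8)) : Set (Fin 8)) := by simp
    have m2 : (2 : Fin 8) ∈ (↑({0, 2, 3, 5, 6} : Finset (Fin 8)) : Set (Fin 8)) := by simp
    have m3 : (3 : Fin 8) ∈ (↑({0, 2, 3, 5, 6} : Finset (Fin 8)) : Set (Fin 8)) := by simp
    have m5 : (5 : Fin 8) ∈ (↑({0, 2, 3, 5, 6} : Finset (Fin 8)) : Set (Fin 8)) := by simp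
    have m6 : (6 : Fin 8) ∈ (↑({0, 2, 3, 5, 6} : Finset (Fin 8)) : Set (Fin 8)) := by simp
    -- 0: 0-1, 5: 1-4, 6: 2-4, 2: 2-3, 3: 3-0
    have a05 := w4_adj m0 m5 1 (by decide) (by decide)
    have a56 := w4_adj m5 m6 4 (by decide) (by decide)
    have a62 := w4_adj m6 m2 2 (by decide) (by decide)
    have a23 := w4_adj m2 m3 3 (by decide) (by decide)
    rcases he with rfl | rfl | rfl | rfl | rfl
    · exact Relation.ReflTransGen.refl
    · exact ((Relation.ReflTransGen.single a05).tail a56).tail a62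
    · exact (((Relation.ReflTransGen.single a05).tail a56).tail a62).tail a23
    · exact Relation.ReflTransGen.single a05
    · exact (Relation.ReflTransGen.single a05).tail a56
  · decide

lemma spokes_refute : ∀ Q : Finset (Fin 8), Q ⊆ {4, 5, 6, 7} →
    ∃ v, (∃ e ∈ ({0, 2} ∪ Q : Finset (Fin 8)), W4.Inc v e) ∧
      finDeg ({0, 2} ∪ Q) v ≠ 2 := by decide

/-- Every frame circuit of `W4Biased` is a cycle of `W4`. -/
lemma w4b_circuit_cycle {X : Set (Fin 8)} (h : W4Biased.FrameCircuit X) : W4.IsCycle X := by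
  rcases h with ⟨hc, _⟩ | ⟨C₁, C₂, C₃, ⟨hc1, hb1⟩, _⟩ | ⟨C₁, C₂, ⟨hc1, hb1⟩, _⟩ |
    ⟨C₁, C₂, P, ⟨hc1, hb1⟩, _⟩
  · exact hc
  all_goals exact absurd hc1 hb1

lemma no_w4_cycle_spokes {P : Set (Fin 8)} (hP : P ⊆ ({4, 5, 6, 7} : Set (Fin 8))) :
    ¬ W4.IsCycle ({0} ∪ {2} ∪ P) := by
  intro h
  obtain ⟨Q, hQ⟩ : ∃ Q : Finset (Fin 8), ↑Q = P :=
    ⟨(Set.toFinite P).toFinset, Set.Finite.coe_toFinset _⟩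
  have hQsub : Q ⊆ ({4, 5, 6, 7} : Finset (Fin 8)) := by
    intro x hx
    have := hP (hQ ▸ Finset.mem_coe.mpr hx)
    simp only [Set.mem_insert_iff, Set.mem_singleton_iff] at this
    rcases this with rfl | rfl | rfl | rfl <;> decide
  have hset : ({0} ∪ {2} ∪ P : Set (Fin 8)) = ↑(({0, 2} : Finset (Fin 8)) ∪ Q) := by
    rw [← hQ]
    ext x
    simp only [Set.mem_union, Set.mem_singleton_iff, Finset.coe_union, Finset.mem_coe,
      Finset.mem_union, Finset.mem_insert, Finset.mem_singleton]
    try tauto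
  rw [hset] at h
  obtain ⟨v, hv, hne⟩ := spokes_refute Q hQsub
  exact hne (w4_cycle_degs h v hv)
/-! ### Biased-graph lemmas -/

namespace BiasedGraph

open MultiGraph

variable {V : Type u} {E : Type v} {Ω : BiasedGraph V E}

/-- Two unbalanced loops plus a connecting path form a loose handcuff,
hence a frame circuit. -/
lemma handcuff_build {c₁ c₂ : E} {v₁ v₂ : V} {P : Set E}
    (hl1 : Ω.toMultiGraph.fst c₁ = v₁) (hl1' : Ω.toMultiGraph.snd c₁ = v₁)
    (hl2 : Ω.toMultiGraph.fst c₂ = v₂) (hl2' : Ω.toMultiGraph.snd c₂ = v₂)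
    (hb1 : {c₁} ∉ Ω.Balanced) (hb2 : {c₂} ∉ Ω.Balanced) (hv : v₁ ≠ v₂)
    (hP : Ω.toMultiGraph.IsPath P) (hEnds : Ω.toMultiGraph.Ends P = {v₁, v₂})
    (hc1P : c₁ ∉ P) (hc2P : c₂ ∉ P) :
    Ω.FrameCircuit ({c₁} ∪ {c₂} ∪ P) := by
  refine Or.inr (Or.inr (Or.inr ⟨{c₁}, {c₂}, P,
    ⟨isCycle_singleton_of_loop hl1 hl1', hb1⟩,
    ⟨isCycle_singleton_of_loop hl2 hl2', hb2⟩, ?_, hP, ?_, ?_, rfl⟩))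
  · rw [vset_singleton_of_loop hl1 hl1', vset_singleton_of_loop hl2 hl2']
    exact Set.disjoint_singleton.mpr hv
  · rw [Set.disjoint_left]
    rintro x hxP (rfl | rfl)
    exacts [hc1P hxP, hc2P hxP]
  · have hv1E : v₁ ∈ Ω.toMultiGraph.Ends P := by rw [hEnds]; simp
    have hv2E : v₂ ∈ Ω.toMultiGraph.Ends P := by rw [hEnds]; simp
    refine ⟨v₁, v₂, hv, hEnds, ?_, ?_⟩
    · rw [vset_singleton_of_loop hl1 hl1']
      ext x
      simp only [Set.mem_inter_iff, Set.mem_singleton_iff]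
      exact ⟨fun h => h.2, fun h => ⟨h ▸ hv1E.1, h⟩⟩
    · rw [vset_singleton_of_loop hl2 hl2']
      ext x
      simp only [Set.mem_inter_iff, Set.mem_singleton_iff]
      exact ⟨fun h => h.2, fun h => ⟨h ▸ hv2E.1, h⟩⟩

/-- Decomposition of a frame circuit containing two unbalanced loops and
at least one further edge: it is a loose handcuff. -/
lemma decomp {c₁ c₂ : E} {u w : V} (hc : c₁ ≠ c₂)
    (hl1 : Ω.toMultiGraph.fst c₁ = u) (hl1' : Ω.toMultiGraph.snd c₁ = u)
    (hl2 : Ω.toMultiGraph.fst c₂ = w) (hl2' : Ω.toMultiGraph.snd c₂ = w)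
    {X : Set E} (hX : Ω.FrameCircuit X) (h1X : c₁ ∈ X) (h2X : c₂ ∈ X)
    (hg : ∃ g ∈ X, g ≠ c₁ ∧ g ≠ c₂) :
    Ω.toMultiGraph.IsPath (X \ {c₁, c₂}) ∧
      Ω.toMultiGraph.Ends (X \ {c₁, c₂}) = {u, w} ∧ u ≠ w := by
  have hloop1 : Ω.toMultiGraph.fst c₁ = Ω.toMultiGraph.snd c₁ := hl1.trans hl1'.symm
  have hloop2 : Ω.toMultiGraph.fst c₂ = Ω.toMultiGraph.snd c₂ := hl2.trans hl2'.symm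
  rcases hX with ⟨hcyc, _⟩ | ⟨C₁, C₂, C₃, h₁, h₂, h₃, hΔ, hU⟩ |
    ⟨C₁, C₂, h₁, h₂, hdisj, hv, hU⟩ |
    ⟨C₁, C₂, P, h₁, h₂, hVd, hPp, hPd, ⟨a, b, hab, hE, hV1, hV2⟩, hU⟩
  · -- balanced cycle
    exfalso
    have := cycle_eq_singleton_of_loop hcyc h1X hloop1
    rw [this] at h2X
    exact hc h2X.symm
  · -- contrabalanced theta
    exfalso
    have key : ∀ A B : Set E, Ω.IsUnbalancedCycle A → Ω.IsUnbalancedCycle B →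
        C₃ = symmDiff A B → c₁ ∈ A → False := by
      intro A B hA hB hΔ' hmem
      have hAeq : A = {c₁} := cycle_eq_singleton_of_loop hA.1 hmem hloop1
      by_cases hmB : c₁ ∈ B
      · have hBeq : B = {c₁} := cycle_eq_singleton_of_loop hB.1 hmB hloop1
        rw [hAeq, hBeq, symmDiff_self] at hΔ'
        obtain ⟨x, hx⟩ := h₃.1.2.1
        rw [hΔ'] at hx
        exact hx
      · have hmC3 : c₁ ∈ C₃ := by
          rw [hΔ', Set.mem_symmDiff]
          exact Or.inl ⟨hAeq ▸ rfl, hmB⟩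
        have hC3eq : C₃ = {c₁} := cycle_eq_singleton_of_loop h₃.1 hmC3 hloop1
        obtain ⟨x, hx⟩ := hB.1.2.1
        have hxC3 : x ∈ C₃ := by
          rw [hΔ', Set.mem_symmDiff]
          refine Or.inr ⟨hx, ?_⟩
          rw [hAeq]
          rintro rfl
          exact hmB hx
        rw [hC3eq, Set.mem_singleton_iff] at hxC3
        subst hxC3
        exact hmB hx
    rw [hU] at h1X
    rcases h1X with hA | hA
    · exact key C₁ C₂ h₁ h₂ hΔ hA
    · exact key C₂ C₁ h₂ h₁ (by rw [hΔ, symmDiff_comm]) hA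
  · -- tight handcuff
    exfalso
    obtain ⟨g, hgX, hg1, hg2⟩ := hg
    have hmem : ∀ x ∈ X, x = c₁ ∨ x = c₂ → x ∈ C₁ ∪ C₂ := by
      intro x hx _; rw [← hU]; exact hx
    rw [hU] at h1X h2X hgX
    have hsplit : (C₁ = {c₁} ∧ C₂ = {c₂}) ∨ (C₁ = {c₂} ∧ C₂ = {c₁}) := by
      rcases h1X with hA | hA
      · have e1 : C₁ = {c₁} := cycle_eq_singleton_of_loop h₁.1 hA hloop1
        rcases h2X with hB | hB
        · rw [e1, Set.mem_singleton_iff] at hB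
          exact absurd hB.symm hc
        · exact Or.inl ⟨e1, cycle_eq_singleton_of_loop h₂.1 hB hloop2⟩
      · have e2 : C₂ = {c₁} := cycle_eq_singleton_of_loop h₂.1 hA hloop1
        rcases h2X with hB | hB
        · exact Or.inr ⟨cycle_eq_singleton_of_loop h₁.1 hB hloop2, e2⟩
        · rw [e2, Set.mem_singleton_iff] at hB
          exact absurd hB.symm hc
    rcases hsplit with ⟨e1, e2⟩ | ⟨e1, e2⟩ <;> rw [e1, e2] at hgX <;>
      rcases hgX with h | h <;> simp only [Set.mem_singleton_iff] at h <;>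
      first | exact hg1 h | exact hg2 h
  · -- loose handcuff
    have hc1P : c₁ ∉ P := fun hm => path_no_loop hPp hm hloop1
    have hc2P : c₂ ∉ P := fun hm => path_no_loop hPp hm hloop2
    rw [hU] at h1X h2X
    have hsplit : (C₁ = {c₁} ∧ C₂ = {c₂}) ∨ (C₁ = {c₂} ∧ C₂ = {c₁}) := by
      rcases h1X with (hA | hA) | hA
      · have e1 : C₁ = {c₁} := cycle_eq_singleton_of_loop h₁.1 hA hloop1
        rcases h2X with (hB | hB) | hB
        · rw [e1, Set.mem_singleton_iff] at hB
          exact absurd hB.symm hc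
        · exact Or.inl ⟨e1, cycle_eq_singleton_of_loop h₂.1 hB hloop2⟩
        · exact absurd (path_no_loop hPp hB hloop2) (fun _ => by exact absurd hB hc2P)
      · have e2 : C₂ = {c₁} := cycle_eq_singleton_of_loop h₂.1 hA hloop1
        rcases h2X with (hB | hB) | hB
        · exact Or.inr ⟨cycle_eq_singleton_of_loop h₁.1 hB hloop2, e2⟩
        · rw [e2, Set.mem_singleton_iff] at hB
          exact absurd hB.symm hc
        · exact absurd hB hc2P
      · exact absurd hA hc1P
    have hPeq : X \ {c₁, c₂} = P := by
      rw [hU]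
      ext x
      simp only [Set.mem_diff, Set.mem_union, Set.mem_insert_iff, Set.mem_singleton_iff]
      constructor
      · rcases hsplit with ⟨e1, e2⟩ | ⟨e1, e2⟩ <;> rw [e1, e2] <;>
          · rintro ⟨(h | h) | h, hne⟩
            · simp only [Set.mem_singleton_iff] at h; tauto
            · simp only [Set.mem_singleton_iff] at h; tauto
            · exact h
      · intro hxP
        have hx1 : x ≠ c₁ := fun h => hc1P (h ▸ hxP)
        have hx2 : x ≠ c₂ := fun h => hc2P (h ▸ hxP)
        exact ⟨Or.inr hxP, fun h => by rcases h with h | h; exacts [hx1 h, hx2 h]⟩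
    rw [hPeq]
    rcases hsplit with ⟨e1, e2⟩ | ⟨e1, e2⟩
    · rw [e1, vset_singleton_of_loop hl1 hl1'] at hV1
      rw [e2, vset_singleton_of_loop hl2 hl2'] at hV2
      have hau : a = u := by
        have : a ∈ Ω.toMultiGraph.VSet P ∩ {u} := hV1 ▸ rfl
        exact this.2
      have hbw : b = w := by
        have : b ∈ Ω.toMultiGraph.VSet P ∩ {w} := hV2 ▸ rfl
        exact this.2
      rw [hau, hbw] at hE hab
      exact ⟨hPp, hE, hab⟩
    · rw [e1, vset_singleton_of_loop hl2 hl2'] at hV1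
      rw [e2, vset_singleton_of_loop hl1 hl1'] at hV2
      have haw : a = w := by
        have : a ∈ Ω.toMultiGraph.VSet P ∩ {w} := hV1 ▸ rfl
        exact this.2
      have hbu : b = u := by
        have : b ∈ Ω.toMultiGraph.VSet P ∩ {u} := hV2 ▸ rfl
        exact this.2
      rw [haw, hbu] at hE hab
      rw [Set.pair_comm w u] at hE
      exact ⟨hPp, hE, hab.symm⟩

end BiasedGraph

theorem stmt_16 {V : Type u} (Ω : BiasedGraph V (Fin 8))
    (hθ : Ω.ThetaProperty)
    (hrep : ∀ X : Set (Fin 8), Ω.FrameCircuit X ↔ W4Biased.FrameCircuit X)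
    (h1 : Ω.toMultiGraph.IsLoopEdge 0 ∧ {(0 : Fin 8)} ∉ Ω.Balanced)
    (h2 : Ω.toMultiGraph.IsLoopEdge 2 ∧ {(2 : Fin 8)} ∉ Ω.Balanced) : False := by
  classical
  obtain ⟨hL0, hB0⟩ := h1
  obtain ⟨hL2, hB2⟩ := h2
  set G := Ω.toMultiGraph with hG
  set u := G.fst 0 with hu
  have hu' : G.snd 0 = u := hL0.symm
  set w := G.fst 2 with hw
  have hw' : G.snd 2 = w := hL2.symm
  have mkFC : ∀ S : Finset (Fin 8), W4.IsCycle ↑S → Ω.FrameCircuit ↑S := fun S hS =>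
    (hrep _).mpr (Or.inl ⟨hS, hS⟩)
  have hF1 := mkFC _ w4_rim
  have hF2 := mkFC _ w4_c5a
  have hF3 := mkFC _ w4_c5b
  have h02 : (0 : Fin 8) ≠ 2 := by decide
  -- decompose the three circuits through 0 and 2
  obtain ⟨hP1, hE1, huw⟩ := BiasedGraph.decomp h02 hu.symm hu' hw.symm hw' hF1
    (by simp) (by simp) ⟨1, by simp, by decide, by decide⟩
  obtain ⟨hP2, hE2, -⟩ := BiasedGraph.decomp h02 hu.symm hu' hw.symm hw' hF2
    (by simp) (by simp) ⟨1, by simp, by decide, by decide⟩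
  obtain ⟨hP3, hE3, -⟩ := BiasedGraph.decomp h02 hu.symm hu' hw.symm hw' hF3
    (by simp) (by simp) ⟨3, by simp, by decide, by decide⟩
  have hset1 : (↑({0, 1, 2, 3} : Finset (Fin 8)) : Set (Fin 8)) \ {0, 2} =
      ({1, 3} : Set (Fin 8)) := by
    ext q
    simp only [Finset.coe_insert, Finset.coe_singleton, Set.mem_diff, Set.mem_insert_iff,
      Set.mem_singleton_iff]
    fin_cases q <;> decide
  have hset2 : (↑({0, 1, 2, 7, 4} : Finset (Fin 8)) : Set (Fin 8)) \ {0, 2} =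
      ({1, 4, 7} : Set (Fin 8)) := by
    ext q
    simp only [Finset.coe_insert, Finset.coe_singleton, Set.mem_diff, Set.mem_insert_iff,
      Set.mem_singleton_iff]
    fin_cases q <;> decide
  have hset3 : (↑({0, 2, 3, 5, 6} : Finset (Fin 8)) : Set (Fin 8)) \ {0, 2} =
      ({3, 5, 6} : Set (Fin 8)) := by
    ext q
    simp only [Finset.coe_insert, Finset.coe_singleton, Set.mem_diff, Set.mem_insert_iff,
      Set.mem_singleton_iff]
    fin_cases q <;> decide
  rw [hset1] at hP1 hE1
  rw [hset2] at hP2 hE2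
  rw [hset3] at hP3 hE3
  -- the final contradiction: no path through spokes only can join the loops
  have hfinal : ∀ P : Set (Fin 8), G.IsPath P → G.Ends P = {u, w} →
      P ⊆ ({4, 5, 6, 7} : Set (Fin 8)) → False := by
    intro P hPp hPE hPsub
    have h0P : (0 : Fin 8) ∉ P := fun h => by
      have := hPsub h
      simp only [Set.mem_insert_iff, Set.mem_singleton_iff] at this
      rcases this with h' | h' | h' | h' <;> exact absurd h' (by decide)
    have h2P : (2 : Fin 8) ∉ P := fun h => by
      have := hPsub h
      simp only [Set.mem_insert_iff, Set.mem_singleton_iff] at this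
      rcases this with h' | h' | h' | h' <;> exact absurd h' (by decide)
    have hfc := BiasedGraph.handcuff_build hu.symm hu' hw.symm hw' hB0 hB2 huw hPp hPE h0P h2P
    exact no_w4_cycle_spokes hPsub (w4b_circuit_cycle ((hrep _).mp hfc))
  -- structure of the 2-edge path {1,3}
  obtain ⟨x, hxu, hxw, hor⟩ := MultiGraph.path2_struct (by decide) hP1 hE1 huw
  -- the symmetric core argument
  have core : ∀ U W : V, U ≠ W → x ≠ U → x ≠ W →
      G.Jn 1 U x → G.Jn 3 x W → G.Ends {1, 4, 7} = {U, W} → G.Ends {3, 5, 6} = {U, W} →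
      (∀ P : Set (Fin 8), G.IsPath P → G.Ends P = {U, W} →
        P ⊆ ({4, 5, 6, 7} : Set (Fin 8)) → False) → False := by
    intro U W hUW hxU hxW hJ1 hJ3 hE2' hE3' hfin
    obtain ⟨y, hyU, hyW, hyx, hor2⟩ := MultiGraph.path3_struct (by decide) (by decide)
      (by decide) hP2 hE2' hUW hxU hxW hJ1
    obtain ⟨z, hzW, hzU, hzx, hor3⟩ := MultiGraph.path3_struct (by decide) (by decide)
      (by decide) hP3 (show G.Ends {3, 5, 6} = {W, U} by rw [hE3', Set.pair_comm])
      (Ne.symm hUW) hxW hxU (MultiGraph.jn_comm hJ3)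
    have glue : ∀ t t' s' s : Fin 8, ({t, s} : Set (Fin 8)) ⊆ {4, 5, 6, 7} →
        ({t, t', s', s} : Set (Fin 8)) ⊆ {4, 5, 6, 7} →
        t ≠ s → t ≠ t' → t ≠ s' → t' ≠ s' → t' ≠ s → s' ≠ s →
        G.Jn s' x y → G.Jn s y W → G.Jn t' x z → G.Jn t z U → False := by
      intro t t' s' s hsub2 hsub4 d_ts d_tt' d_ts' d_t's' d_t's d_s's hJa hJb hJc hJd
      by_cases hyz : y = z
      · have hJtU : G.Jn t U y := by rw [hyz]; exact MultiGraph.jn_comm hJd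
        obtain ⟨hPp, hPE⟩ := MultiGraph.path2_build d_ts (Ne.symm hyU) hyW hUW hJtU hJb
        exact hfin _ hPp hPE hsub2
      · obtain ⟨hPp, hPE⟩ := MultiGraph.path4_build d_tt' d_ts' d_ts d_t's' d_t's d_s's
          (Ne.symm hzU) (Ne.symm hxU) (Ne.symm hyU) hUW hzx (fun h => hyz h.symm) hzW
          (Ne.symm hyx) hxW hyW
          (MultiGraph.jn_comm hJd) (MultiGraph.jn_comm hJc) hJa hJb
        exact hfin _ hPp hPE hsub4
    have hsub : ∀ a b : Fin 8, a ∈ ({4, 5, 6, 7} : Set (Fin 8)) →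
        b ∈ ({4, 5, 6, 7} : Set (Fin 8)) → ({a, b} : Set (Fin 8)) ⊆ {4, 5, 6, 7} := by
      intro a b ha hb q hq
      rcases hq with rfl | hq
      · exact ha
      · rw [Set.mem_singleton_iff] at hq
        exact hq ▸ hb
    have hsub4 : ∀ a b c d : Fin 8, a ∈ ({4, 5, 6, 7} : Set (Fin 8)) →
        b ∈ ({4, 5, 6, 7} : Set (Fin 8)) → c ∈ ({4, 5, 6, 7} : Set (Fin 8)) →
        d ∈ ({4, 5, 6, 7} : Set (Fin 8)) →
        ({a, b, c, d} : Set (Fin 8)) ⊆ {4, 5, 6, 7} := by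
      intro a b c d ha hb hc hd q hq
      rcases hq with rfl | rfl | rfl | hq
      · exact ha
      · exact hb
      · exact hc
      · rw [Set.mem_singleton_iff] at hq
        exact hq ▸ hd
    rcases hor2 with ⟨hJa, hJb⟩ | ⟨hJa, hJb⟩ <;> rcases hor3 with ⟨hJc, hJd⟩ | ⟨hJc, hJd⟩
    · exact glue 6 5 4 7 (hsub _ _ (by simp) (by simp))
        (hsub4 _ _ _ _ (by simp) (by simp) (by simp) (by simp))
        (by decide) (by decide) (by decide) (by decide) (by decide) (by decide)
        hJa hJb hJc hJd
    · exact glue 5 6 4 7 (hsub _ _ (by simp) (by simp))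
        (hsub4 _ _ _ _ (by simp) (by simp) (by simp) (by simp))
        (by decide) (by decide) (by decide) (by decide) (by decide) (by decide)
        hJa hJb hJc hJd
    · exact glue 6 5 7 4 (hsub _ _ (by simp) (by simp))
        (hsub4 _ _ _ _ (by simp) (by simp) (by simp) (by simp))
        (by decide) (by decide) (by decide) (by decide) (by decide) (by decide)
        hJa hJb hJc hJd
    · exact glue 5 6 7 4 (hsub _ _ (by simp) (by simp))
        (hsub4 _ _ _ _ (by simp) (by simp) (by simp) (by simp))
        (by decide) (by decide) (by decide) (by decide) (by decide) (by decide)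
        hJa hJb hJc hJd
  rcases hor with ⟨hJ1, hJ3⟩ | ⟨hJ1, hJ3⟩
  · exact core u w huw hxu hxw hJ1 hJ3 hE2 hE3 hfinal
  · exact core w u (Ne.symm huw) hxw hxu hJ1 hJ3
      (by rw [hE2, Set.pair_comm]) (by rw [hE3, Set.pair_comm])
      (fun P hp he hs => hfinal P hp (by rw [he, Set.pair_comm]) hs)
end
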